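/- Strong Bernoulli Property: let ℙ be a Bernoulli measure on ∂M, let V : ∂M → M̄ be an asynchronous stopping time, and let ψ : ∂M → ℝ be an 𝔉-measurable function that is either nonnegative or ℙ-integrable; extend ψ∘θ_V by the value 0 on the set {ξ : ξ_V ∉ M}. Then E(ψ∘θ_V | 𝔉_V) = E(ψ) holds ℙ-almost surely on the event {ξ : ξ_V ∈ M}, where E denotes expectation with respect to ℙ. -/

import Mathlib

open MeasureTheory Filter
open scoped ENNReal NNReal

namespace HeapPaper

variable {S : Type}

/-- Commutation pairs of words, generating the trace congruence. -/
def CommRel (I : S → S → Prop) (w₁ w₂ : FreeMonoid S) : Prop :=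
  ∃ a b : S, I a b ∧ w₁ = FreeMonoid.of a * FreeMonoid.of b ∧
    w₂ = FreeMonoid.of b * FreeMonoid.of a

/-- The congruence on the free monoid generated by the commutation of independent pieces. -/
def HeapCon (I : S → S → Prop) : Con (FreeMonoid S) := conGen (CommRel I)

/-- The heap monoid `M(Σ, I)`:  the presented monoid `⟨Σ | ab = ba, (a,b) ∈ I⟩`. -/
def Heap (I : S → S → Prop) := (HeapCon I).Quotient

instance (I : S → S → Prop) : Monoid (Heap I) :=
  inferInstanceAs (Monoid (HeapCon I).Quotient)

/-- The unique additive extension to heaps of a function `φ` defined on pieces. -/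
def addExt {A : Type} [AddCommMonoid A] {I : S → S → Prop} (φ : S → A) : Heap I → A :=
  fun x => Multiplicative.toAdd <|
    (Con.lift (HeapCon I) (FreeMonoid.lift fun a => Multiplicative.ofAdd (φ a))
      (Con.conGen_le.mpr (by
        rintro w₁ w₂ ⟨a, b, hab, rfl, rfl⟩
        exact (Con.ker_rel _).mpr (by simp [map_mul, mul_comm])))) x

/-- The length `|x|` of a heap: the common length of its representative words. -/
def len {I : S → S → Prop} (x : Heap I) : ℕ := addExt (fun _ => 1) x

/-- The number `|x|ₐ` of occurrences of the piece `a` in the heap `x`. -/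
def occ {I : S → S → Prop} [DecidableEq S] (a : S) (x : Heap I) : ℕ :=
  addExt (fun b => if b = a then 1 else 0) x

/-- The additive extension `⟨φ, x⟩` of a real-valued cost function. -/
def pairing {I : S → S → Prop} (φ : S → ℝ) (x : Heap I) : ℝ := addExt φ x

/-- The left-divisibility order on the heap monoid. -/
def hLe {I : S → S → Prop} (x y : Heap I) : Prop := ∃ z : Heap I, y = x * z

/-- Cliques: finite sets of pairwise independent pieces. -/
def Cl (I : S → S → Prop) := {s : Finset S // ∀ a ∈ s, ∀ b ∈ s, a ≠ b → I a b}

/-- The empty clique. -/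
def emptyCl (I : S → S → Prop) : Cl I := ⟨∅, by simp⟩

/-- The heap associated with a clique (product of its pieces, in any order). -/
def Cl.heap {I : S → S → Prop} (γ : Cl I) : Heap I :=
  γ.1.noncommProd (fun a => (HeapCon I).mk' (FreeMonoid.of a)) (by
    intro a ha b hb hab
    have hI : I a b := γ.2 a ha b hb hab
    show (HeapCon I).mk' (FreeMonoid.of a) * (HeapCon I).mk' (FreeMonoid.of b)
        = (HeapCon I).mk' (FreeMonoid.of b) * (HeapCon I).mk' (FreeMonoid.of a)
    rw [← map_mul, ← map_mul]
    exact (Con.eq _).mpr (ConGen.Rel.of _ _ ⟨a, b, hI, rfl, rfl⟩))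

/-- The Cartier–Foata move relation `γ → γ'` between cliques. -/
def Move {I : S → S → Prop} (γ γ' : Cl I) : Prop :=
  ∀ b ∈ γ'.1, ∃ a ∈ γ.1, ¬ I a b

/-- The boundary `∂M`: infinite admissible sequences of nonempty cliques. -/
def Bnd (I : S → S → Prop) :=
  {ξ : ℕ → Cl I // (∀ n, (ξ n).1.Nonempty) ∧ ∀ n, Move (ξ n) (ξ (n + 1))}

/-- `M̄ = M ∪ ∂M`. -/
def MB (I : S → S → Prop) := Heap I ⊕ Bnd I

/-- Partial products of a sequence of cliques. -/
def ppSeq {I : S → S → Prop} (c : ℕ → Cl I) (n : ℕ) : Heap I :=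
  ((List.range n).map fun i => (c i).heap).prod

/-- `c` is the Cartier–Foata decomposition of the heap `x`, padded with empty cliques:
`c` is admissible, eventually empty, with partial products eventually equal to `x`. -/
def CFprop (I : S → S → Prop) (c : ℕ → Cl I) (x : Heap I) : Prop :=
  (∀ n, Move (c n) (c (n + 1))) ∧
    ∃ N, ∀ n, N ≤ n → ppSeq c n = x ∧ c n = emptyCl I

/-- The (padded) Cartier–Foata decomposition of a heap. -/
noncomputable def cf (I : S → S → Prop) (x : Heap I) : ℕ → Cl I :=
  letI := Classical.propDecidable (∃ c, CFprop I c x)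
  if h : ∃ c, CFprop I c x then h.choose else fun _ => emptyCl I

/-- The Cartier–Foata sequence of an element of `M̄`. -/
noncomputable def seqOf {I : S → S → Prop} : MB I → ℕ → Cl I
  | .inl x => cf I x
  | .inr ξ => ξ.1

/-- Partial products of the Cartier–Foata sequence of an element of `M̄`. -/
noncomputable def pp {I : S → S → Prop} (ζ : MB I) (n : ℕ) : Heap I :=
  ppSeq (seqOf ζ) n

/-- The order on `M̄`: `ξ ≤ ξ'` iff `γ₁⋯γₙ ≤ γ'₁⋯γ'ₙ` in `M` for all `n`. -/
noncomputable def mLe {I : S → S → Prop} (ζ ζ' : MB I) : Prop :=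
  ∀ n : ℕ, hLe (pp ζ n) (pp ζ' n)

/-- The elementary cylinder `↑x ⊆ ∂M` of base `x ∈ M`. -/
noncomputable def cyl {I : S → S → Prop} (x : Heap I) : Set (Bnd I) :=
  {ξ : Bnd I | mLe (.inl x) (.inr ξ)}

/-- The σ-algebra `𝔉` on `∂M` generated by the elementary cylinders. -/
noncomputable def Fsa (I : S → S → Prop) : MeasurableSpace (Bnd I) :=
  MeasurableSpace.generateFrom {A : Set (Bnd I) | ∃ x : Heap I, A = cyl x}

noncomputable instance (I : S → S → Prop) : MeasurableSpace (Bnd I) := Fsa I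

/-- `ζ` is the least upper bound in `M̄` of the nondecreasing sequence `(x·γ₁⋯γₙ)ₙ`,
where `(γₙ)` is the Cartier–Foata sequence of `ξ`; this characterizes `x·ξ`. -/
noncomputable def IsConc {I : S → S → Prop} (x : Heap I) (ξ : Bnd I) (ζ : MB I) : Prop :=
  (∀ n : ℕ, mLe (.inl (x * pp (.inr ξ) n)) ζ) ∧
    ∀ η : MB I, (∀ n : ℕ, mLe (.inl (x * pp (.inr ξ) n)) η) → mLe ζ η

/-- The concatenation `x·ξ ∈ ∂M` of a heap `x` and an infinite heap `ξ`. -/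
noncomputable def concB {I : S → S → Prop} (x : Heap I) (ξ : Bnd I) : Bnd I :=
  letI := Classical.propDecidable (∃ ζ : Bnd I, IsConc x ξ (.inr ζ))
  if h : ∃ ζ : Bnd I, IsConc x ξ (.inr ζ) then h.choose else ξ

/-- The difference `ξ − x`: the unique `ζ ∈ ∂M` with `x·ζ = ξ` (junk value if none exists). -/
noncomputable def subB {I : S → S → Prop} (ξ : Bnd I) (x : Heap I) : Bnd I :=
  letI := Classical.propDecidable (∃ ζ : Bnd I, concB x ζ = ξ)
  if h : ∃ ζ : Bnd I, concB x ζ = ξ then h.choose else ξ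

/-- Asynchronous stopping time. -/
noncomputable def IsAST {I : S → S → Prop} (V : Bnd I → MB I) : Prop :=
  (∀ ξ : Bnd I, mLe (V ξ) (.inr ξ)) ∧
    ∀ (ξ ξ' : Bnd I) (x : Heap I), V ξ = .inl x → mLe (.inl x) (.inr ξ') → V ξ' = V ξ

/-- The shift operator `θ_V` associated with an AST `V` (junk: identity outside its domain). -/
noncomputable def shiftV {I : S → S → Prop} (V : Bnd I → MB I) (ξ : Bnd I) : Bnd I :=
  match V ξ with
  | .inl x => subB ξ x
  | .inr _ => ξ

/-- The σ-algebra `𝔉_V` generated by the cylinders of the finite values of `V`. -/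
noncomputable def astSA {I : S → S → Prop} (V : Bnd I → MB I) : MeasurableSpace (Bnd I) :=
  MeasurableSpace.generateFrom
    {A : Set (Bnd I) | ∃ x : Heap I, (∃ ξ : Bnd I, V ξ = .inl x) ∧ A = cyl x}

/-- The iterated sequence `(Vₙ)ₙ` of an AST `V`:  `V₀ = 0` and
`V_{n+1}(ξ) = Vₙ(ξ)·V(ξ − Vₙ(ξ))` if `Vₙ(ξ) ∈ M`, `V_{n+1}(ξ) = ξ` otherwise. -/
noncomputable def iter {I : S → S → Prop} (V : Bnd I → MB I) : ℕ → Bnd I → MB I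
  | 0, _ => .inl 1
  | n + 1, ξ =>
    match iter V n ξ with
    | .inl x =>
      match V (subB ξ x) with
      | .inl y => .inl (x * y)
      | .inr ζ => .inr (concB x ζ)
    | .inr _ => .inr ξ

/-- The increment `Δ_{n+1} = V ∘ θ_{Vₙ}` (junk value outside the domain of `θ_{Vₙ}`). -/
noncomputable def Delta {I : S → S → Prop} (V : Bnd I → MB I) (n : ℕ) (ξ : Bnd I) : MB I :=
  match iter V n ξ with
  | .inl x => V (subB ξ x)
  | .inr _ => .inr ξ

/-- The length of an element of `M̄`, with `|ξ| = ∞` for `ξ ∈ ∂M`. -/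
noncomputable def lenE {I : S → S → Prop} : MB I → ℝ≥0∞
  | .inl x => (len x : ℝ≥0∞)
  | .inr _ => ⊤

/-- `E|V| < ∞`. -/
noncomputable def EVfin {I : S → S → Prop} (P : Measure (Bnd I)) (V : Bnd I → MB I) : Prop :=
  ∫⁻ ξ, lenE (V ξ) ∂P < ⊤

/-- The AST `V` is exhaustive: it is `ℙ`-a.s. finite and `ℙ`-a.s. `ξ = ⋁ₙ Vₙ(ξ)`
(`ξ` is the least upper bound of its iterates). -/
noncomputable def Exhaustive {I : S → S → Prop} (P : Measure (Bnd I)) (V : Bnd I → MB I) : Prop :=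
  (∀ᵐ ξ ∂P, ∃ x : Heap I, V ξ = .inl x) ∧
    ∀ᵐ ξ ∂P, (∀ n : ℕ, mLe (iter V n ξ) (.inr ξ)) ∧
      ∀ ζ : MB I, (∀ n : ℕ, mLe (iter V n ξ) ζ) → mLe (.inr ξ) ζ

/-- `ℙ` is a Bernoulli measure: a probability measure on `(∂M, 𝔉)` that is multiplicative
and positive on elementary cylinders. -/
noncomputable def IsBernoulli {I : S → S → Prop} (P : Measure (Bnd I)) : Prop :=
  IsProbabilityMeasure P ∧
    (∀ x y : Heap I, P (cyl (x * y)) = P (cyl x) * P (cyl y)) ∧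
    ∀ x : Heap I, 0 < P (cyl x)

/-- `ζ` is the greatest lower bound, within the complete lattice `L(ξ)`, of the set
`Hₐ(ξ)` of finite subheaps of `ξ` containing an occurrence of `a`:  this characterizes
the first hitting time of `a`. -/
noncomputable def IsHit {I : S → S → Prop} [DecidableEq S] (a : S) (ξ : Bnd I) (ζ : MB I) :
    Prop :=
  mLe ζ (.inr ξ) ∧
    (∀ x : Heap I, mLe (.inl x) (.inr ξ) → 0 < occ a x → mLe ζ (.inl x)) ∧
    ∀ η : MB I, mLe η (.inr ξ) →
      (∀ x : Heap I, mLe (.inl x) (.inr ξ) → 0 < occ a x → mLe η (.inl x)) → mLe η ζ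

/-- The first hitting time of the piece `a`. -/
noncomputable def hit {I : S → S → Prop} [DecidableEq S] (a : S) (ξ : Bnd I) : MB I :=
  letI := Classical.propDecidable (∃ ζ : MB I, IsHit a ξ ζ)
  if h : ∃ ζ : MB I, IsHit a ξ ζ then h.choose else .inr ξ

/-- A maximal clique: a maximal element of `(𝒞, ≤)`. -/
noncomputable def IsMaxCl {I : S → S → Prop} (γ : Cl I) : Prop :=
  ∀ δ : Cl I, hLe γ.heap δ.heap → δ.heap = γ.heap

/-- The AST cutting an infinite heap at the first occurrence of a maximal clique. -/
noncomputable def Vmax {I : S → S → Prop} (ξ : Bnd I) : MB I :=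
  letI := Classical.propDecidable
  if h : ∃ k : ℕ, IsMaxCl (ξ.1 k) then .inl (ppSeq ξ.1 (Nat.find h + 1)) else .inr ξ

/-- The ergodic mean `⟨φ, x⟩ / |x|` (junk value `0` on infinite heaps). -/
noncomputable def ratioC {I : S → S → Prop} (φ : S → ℝ) : MB I → ℝ
  | .inl x => pairing φ x / (len x : ℝ)
  | .inr _ => 0

/-- The ratio `φ(x)/|x|` for `φ` defined on heaps (junk value `0` on infinite heaps). -/
noncomputable def ratioH {I : S → S → Prop} (φ : Heap I → ℝ) : MB I → ℝ
  | .inl x => φ x / (len x : ℝ)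
  | .inr _ => 0

/-- The set `ℭ` of nonempty cliques. -/
def NCl (I : S → S → Prop) := {γ : Cl I // γ.1.Nonempty}

instance [Fintype S] (I : S → S → Prop) : Finite (Cl I) :=
  inferInstanceAs (Finite {s : Finset S // ∀ a ∈ s, ∀ b ∈ s, a ≠ b → I a b})

instance [Fintype S] (I : S → S → Prop) : Finite (NCl I) :=
  inferInstanceAs (Finite {γ : Cl I // γ.1.Nonempty})

/-- The valuation `f(x) = ℙ(↑x)` associated with `ℙ`. -/
noncomputable def fval {I : S → S → Prop} (P : Measure (Bnd I)) (x : Heap I) : ℝ :=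
  (P (cyl x)).toReal

open Classical in
/-- The Möbius transform `h` of the valuation `f` associated with `ℙ`. -/
noncomputable def mobius {I : S → S → Prop} (P : Measure (Bnd I)) (γ : Cl I) : ℝ :=
  ∑ᶠ γ' : Cl I,
    if hLe γ.heap γ'.heap then (-1 : ℝ) ^ (γ'.1.card - γ.1.card) * fval P γ'.heap else 0

open Classical in
/-- The normalization `g(γ) = Σ_{γ'∈ℭ, γ→γ'} h(γ')`. -/
noncomputable def gnorm {I : S → S → Prop} (P : Measure (Bnd I)) (γ : Cl I) : ℝ :=
  ∑ᶠ γ' : Cl I, if γ'.1.Nonempty ∧ Move γ γ' then mobius P γ' else 0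

open Classical in
/-- The transition matrix of the Markov chain of cliques. -/
noncomputable def Pmat {I : S → S → Prop} (P : Measure (Bnd I)) (γ γ' : Cl I) : ℝ :=
  if Move γ γ' then mobius P γ' / gnorm P γ else 0

/-- `π` is a stationary probability distribution, carried by the nonempty cliques, of the
Markov chain of cliques. -/
noncomputable def IsStationary {I : S → S → Prop} (P : Measure (Bnd I)) (π : Cl I → ℝ) :
    Prop :=
  (∀ γ : Cl I, 0 ≤ π γ) ∧ (π (emptyCl I) = 0) ∧ (∑ᶠ γ : Cl I, π γ = 1) ∧
    ∀ γ' : Cl I, π γ' = ∑ᶠ γ : Cl I, π γ * Pmat P γ γ'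

open Classical in
/-- The nonnegative matrix `B` on `ℭ×ℭ`: `B_{γ,γ'} = f(γ')` if `γ → γ'`, else `0`. -/
noncomputable def Bmat {I : S → S → Prop} (P : Measure (Bnd I)) :
    Matrix (NCl I) (NCl I) ℝ :=
  fun γ γ' => if Move γ.1 γ'.1 then fval P γ'.1.heap else 0

/-- The spectral radius of `B` (as a complex matrix). -/
noncomputable def specRadB [Fintype S] {I : S → S → Prop} (P : Measure (Bnd I)) : ℝ≥0∞ :=
  letI : Fintype (NCl I) := Fintype.ofFinite _
  letI : DecidableEq (NCl I) := Classical.decEq _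
  spectralRadius ℂ ((Bmat P).map (algebraMap ℝ ℂ))

/-- The height `τ(x)` of a heap: the number of cliques in its Cartier–Foata decomposition. -/
noncomputable def height {I : S → S → Prop} (x : Heap I) : ℕ :=
  sInf {N : ℕ | ∀ n, N ≤ n → cf I x n = emptyCl I}

/-- The ratio `|x|/τ(x)` (junk value `0` on infinite heaps). -/
noncomputable def speedRatio {I : S → S → Prop} : MB I → ℝ
  | .inl x => (len x : ℝ) / (height x : ℝ)
  | .inr _ => 0

/-- `ψ ∘ θ_V` extended by `0` outside the domain of `θ_V`. -/
noncomputable def extShift {I : S → S → Prop} (V : Bnd I → MB I) (ψ : Bnd I → ℝ)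
    (η : Bnd I) : ℝ :=
  match V η with
  | .inl _ => ψ (shiftV V η)
  | .inr _ => 0

section DevWords
set_option linter.unusedSectionVars false

variable {S : Type} [DecidableEq S] {I : S → S → Prop}

/-- Word to heap. -/
def mkw (I : S → S → Prop) (l : List S) : Heap I := (HeapCon I).mk' (FreeMonoid.ofList l)

/-- Single letter heap. -/
def sg (I : S → S → Prop) (a : S) : Heap I := mkw I [a]

lemma mkw_append (l m : List S) : mkw I (l ++ m) = mkw I l * mkw I m := by
  simp only [mkw, FreeMonoid.ofList_append, map_mul]; rfl

lemma mkw_nil : mkw I [] = 1 := map_one _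

lemma mkw_cons (a : S) (l : List S) : mkw I (a :: l) = sg I a * mkw I l := by
  have : (a :: l) = [a] ++ l := rfl
  rw [this, mkw_append]; rfl

lemma heap_exists_rep (x : Heap I) : ∃ l : List S, x = mkw I l := by
  obtain ⟨w, hw⟩ := Con.mk'_surjective (c := HeapCon I) x
  exact ⟨w.toList, by rw [← hw]; simp [mkw, FreeMonoid.ofList_toList]; rfl⟩

lemma mkw_eq_iff {l m : List S} :
    mkw I l = mkw I m ↔ HeapCon I (FreeMonoid.ofList l) (FreeMonoid.ofList m) := by
  simp only [mkw, Con.mk']; exact Con.eq _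

lemma hc_swap {a b : S} (h : I a b) :
    HeapCon I (FreeMonoid.of a * FreeMonoid.of b) (FreeMonoid.of b * FreeMonoid.of a) :=
  ConGen.Rel.of _ _ ⟨a, b, h, rfl, rfl⟩

/-- The projection filter onto letters `a`, `b`. -/
def pf (a b : S) : S → Bool := fun c => decide (c = a ∨ c = b)

lemma pf_left (a b : S) : pf a b a = true := by simp [pf]
lemma pf_right (a b : S) : pf a b b = true := by simp [pf]

/-- The projection congruence. -/
def projCon (a b : S) : Con (FreeMonoid S) where
  r w v := w.toList.filter (pf a b) = v.toList.filter (pf a b)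
  iseqv := ⟨fun _ => rfl, Eq.symm, Eq.trans⟩
  mul' h₁ h₂ := by
    simp only [FreeMonoid.toList_mul, List.filter_append]
    rw [h₁, h₂]

lemma proj_congr (hsymm : ∀ a b : S, I a b → I b a) {a b : S} (hab : ¬ I a b)
    {w v : FreeMonoid S} (h : HeapCon I w v) :
    w.toList.filter (pf a b) = v.toList.filter (pf a b) := by
  have hle : HeapCon I ≤ projCon a b := by
    apply Con.conGen_le.mpr
    rintro x y ⟨c, d, hcd, rfl, rfl⟩
    show (FreeMonoid.of c * FreeMonoid.of d).toList.filter (pf a b)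
        = (FreeMonoid.of d * FreeMonoid.of c).toList.filter (pf a b)
    have hcd' : c ≠ d → ¬ (c = a ∨ c = b) ∨ ¬ (d = a ∨ d = b) := by
      intro hne
      by_contra hcon
      push_neg at hcon
      obtain ⟨hc, hd⟩ := hcon
      rcases hc with rfl | rfl <;> rcases hd with rfl | rfl
      · exact hne rfl
      · exact hab hcd
      · exact hab (hsymm _ _ hcd)
      · exact hne rfl
    by_cases hne : c = d
    · subst hne; rfl
    · rcases hcd' hne with hc | hd
      · have : pf a b c = false := by simp [pf, hc]
        simp [FreeMonoid.toList_mul, List.filter, this]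
      · have : pf a b d = false := by simp [pf, hd]
        simp [FreeMonoid.toList_mul, List.filter, this]
  exact hle h

lemma first_split {c : S} {m : List S} (h : c ∈ m) :
    ∃ p q : List S, m = p ++ c :: q ∧ c ∉ p := by
  induction m with
  | nil => simp at h
  | cons d m ih =>
    by_cases hdc : d = c
    · exact ⟨[], m, by simp [hdc], by simp⟩
    · have hc : c ∈ m := by
        rcases List.mem_cons.mp h with h' | h'
        · exact absurd h'.symm hdc
        · exact h'
      obtain ⟨p, q, rfl, hp⟩ := ih hc
      refine ⟨d :: p, q, rfl, ?_⟩
      simp only [List.mem_cons, not_or]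
      exact ⟨fun hh => hdc hh.symm, hp⟩

lemma swapout {c : S} : ∀ p q : List S, (∀ d ∈ p, I d c) →
    HeapCon I (FreeMonoid.ofList (p ++ c :: q)) (FreeMonoid.ofList (c :: (p ++ q))) := by
  intro p
  induction p with
  | nil => intro q _; exact (HeapCon I).refl _
  | cons d p ih =>
    intro q h
    have h1 := ih q (fun e he => h e (List.mem_cons_of_mem d he))
    have h2 : HeapCon I (FreeMonoid.ofList (d :: (p ++ c :: q)))
        (FreeMonoid.ofList (d :: c :: (p ++ q))) := by
      have := (HeapCon I).mul ((HeapCon I).refl (FreeMonoid.of d)) h1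
      simpa only [FreeMonoid.ofList_cons] using this
    have h3 : HeapCon I (FreeMonoid.ofList (d :: c :: (p ++ q)))
        (FreeMonoid.ofList (c :: d :: (p ++ q))) := by
      have hs := hc_swap (I := I) (h d List.mem_cons_self)
      have := (HeapCon I).mul hs ((HeapCon I).refl (FreeMonoid.ofList (p ++ q)))
      simpa only [FreeMonoid.ofList_cons, mul_assoc] using this
    exact (HeapCon I).trans h2 h3

lemma recon_nil (hirr : ∀ a : S, ¬ I a a) (m : List S)
    (h : ∀ a b : S, ¬ I a b → (List.filter (pf a b) ([] : List S)) = m.filter (pf a b)) :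
    m = [] := by
  cases m with
  | nil => rfl
  | cons d m' =>
    exfalso
    have := h d d (hirr d)
    simp only [List.filter_nil] at this
    have hd : pf d d d = true := pf_left d d
    rw [List.filter_cons, if_pos hd] at this
    exact List.cons_ne_nil _ _ this.symm

lemma recon (hsymm : ∀ a b : S, I a b → I b a) (hirr : ∀ a : S, ¬ I a a) :
    ∀ n (l m : List S), l.length ≤ n →
    (∀ a b : S, ¬ I a b → l.filter (pf a b) = m.filter (pf a b)) →
    HeapCon I (FreeMonoid.ofList l) (FreeMonoid.ofList m) := by
  intro n
  induction n with
  | zero =>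
    intro l m hl h
    have hlnil : l = [] := List.eq_nil_of_length_eq_zero (Nat.le_zero.mp hl)
    subst hlnil
    rw [recon_nil hirr m h]
    exact (HeapCon I).refl _
  | succ n ih =>
    intro l m hl h
    cases l with
    | nil =>
      rw [recon_nil hirr m h]
      exact (HeapCon I).refl _
    | cons c l₁ =>
      have hcm : c ∈ m := by
        have hcc := h c c (hirr c)
        have hmem : c ∈ m.filter (pf c c) := by
          rw [← hcc, List.filter_cons, if_pos (pf_left c c)]
          exact List.mem_cons_self
        exact (List.mem_filter.mp hmem).1
      obtain ⟨p, q, rfl, hcp⟩ := first_split hcm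
      have hpI : ∀ d ∈ p, I d c := by
        intro d hd
        by_contra hdc
        have hfil := h d c hdc
        have hLHS : (c :: l₁).filter (pf d c) = c :: l₁.filter (pf d c) := by
          rw [List.filter_cons, if_pos (pf_right d c)]
        have hdp : d ∈ p.filter (pf d c) := List.mem_filter.mpr ⟨hd, pf_left d c⟩
        rw [hLHS, List.filter_append, List.filter_cons, if_pos (pf_right d c)] at hfil
        cases hpf : p.filter (pf d c) with
        | nil => rw [hpf] at hdp; simp at hdp
        | cons e t =>
          rw [hpf] at hfil
          have : c = e := by
            have := congrArg List.head? hfil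
            simpa using this
          subst this
          have : c ∈ p := (List.mem_filter.mp (hpf ▸ (List.mem_cons_self : c ∈ c :: t))).1
          exact hcp this
      have hsw := swapout (I := I) p q hpI
      have hnext : ∀ a b : S, ¬ I a b →
          l₁.filter (pf a b) = (p ++ q).filter (pf a b) := by
        intro a b hab
        have h2 : ((c :: l₁).filter (pf a b)) = ((c :: (p ++ q)).filter (pf a b)) :=
          (h a b hab).trans (proj_congr hsymm hab hsw)
        rw [List.filter_cons, List.filter_cons] at h2
        by_cases hc : pf a b c = true
        · rw [if_pos hc, if_pos hc] at h2
          exact List.tail_eq_of_cons_eq h2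
        · rw [if_neg hc, if_neg hc] at h2
          exact h2
      have hIH := ih l₁ (p ++ q) (Nat.le_of_succ_le_succ hl) hnext
      have hcons : HeapCon I (FreeMonoid.ofList (c :: l₁)) (FreeMonoid.ofList (c :: (p ++ q))) := by
        have := (HeapCon I).mul ((HeapCon I).refl (FreeMonoid.of c)) hIH
        simpa only [FreeMonoid.ofList_cons] using this
      exact (HeapCon I).trans hcons ((HeapCon I).symm hsw)

lemma heap_cancel_left (hsymm : ∀ a b : S, I a b → I b a) (hirr : ∀ a : S, ¬ I a a)
    {x y z : Heap I} (h : x * y = x * z) : y = z := by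
  obtain ⟨lx, rfl⟩ := heap_exists_rep x
  obtain ⟨ly, rfl⟩ := heap_exists_rep y
  obtain ⟨lz, rfl⟩ := heap_exists_rep z
  rw [← mkw_append, ← mkw_append, mkw_eq_iff] at h
  rw [mkw_eq_iff]
  apply recon hsymm hirr ly.length _ _ le_rfl
  intro a b hab
  have := proj_congr hsymm hab h
  simp only [FreeMonoid.toList_ofList, List.filter_append] at this
  exact List.append_cancel_left this

lemma heap_cancel_right (hsymm : ∀ a b : S, I a b → I b a) (hirr : ∀ a : S, ¬ I a a)
    {x y z : Heap I} (h : y * x = z * x) : y = z := by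
  obtain ⟨lx, rfl⟩ := heap_exists_rep x
  obtain ⟨ly, rfl⟩ := heap_exists_rep y
  obtain ⟨lz, rfl⟩ := heap_exists_rep z
  rw [← mkw_append, ← mkw_append, mkw_eq_iff] at h
  rw [mkw_eq_iff]
  apply recon hsymm hirr ly.length _ _ le_rfl
  intro a b hab
  have := proj_congr hsymm hab h
  simp only [FreeMonoid.toList_ofList, List.filter_append] at this
  exact List.append_cancel_right this

end DevWords


section DevBasic
set_option linter.unusedSectionVars false
variable {S : Type} [DecidableEq S] {I : S → S → Prop}

lemma addExt_mul {A : Type} [AddCommMonoid A] (φ : S → A) (x y : Heap I) :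
    addExt φ (x * y) = addExt φ x + addExt φ y := by
  unfold addExt; exact congrArg Multiplicative.toAdd (map_mul _ x y)

lemma addExt_one {A : Type} [AddCommMonoid A] (φ : S → A) : addExt (I := I) φ 1 = 0 := by
  simp [addExt]; exact map_one _

lemma addExt_sg {A : Type} [AddCommMonoid A] (φ : S → A) (a : S) :
    addExt φ (sg I a) = φ a := by
  simp [addExt, sg, mkw, Con.lift_mk']; erw [Con.lift_coe]; simp

lemma len_mul (x y : Heap I) : len (x * y) = len x + len y := addExt_mul _ _ _
lemma len_one : len (1 : Heap I) = 0 := addExt_one _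
lemma len_sg (a : S) : len (sg I a) = 1 := addExt_sg _ _

lemma len_mkw (l : List S) : len (mkw I l) = l.length := by
  induction l with
  | nil => rw [mkw_nil]; exact len_one
  | cons a l ih => rw [mkw_cons, len_mul, len_sg, ih, List.length_cons]; omega

lemma occ_mul (a : S) (x y : Heap I) : occ a (x * y) = occ a x + occ a y := addExt_mul _ _ _
lemma occ_one (a : S) : occ a (1 : Heap I) = 0 := addExt_one _
lemma occ_sg (a b : S) : occ a (sg I b) = if b = a then 1 else 0 := addExt_sg _ _

lemma occ_mkw (a : S) (l : List S) : occ a (mkw I l) = l.count a := by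
  induction l with
  | nil => rw [mkw_nil]; simp [occ_one]
  | cons b l ih =>
    rw [mkw_cons, occ_mul, occ_sg, ih, List.count_cons]
    by_cases h : b = a <;> simp [h] <;> omega

lemma occ_pos_iff {a : S} {l : List S} : 0 < occ a (mkw I l) ↔ a ∈ l := by
  rw [occ_mkw]
  exact List.count_pos_iff

lemma eq_one_of_len_eq_zero {x : Heap I} (h : len x = 0) : x = 1 := by
  obtain ⟨l, rfl⟩ := heap_exists_rep x
  rw [len_mkw] at h
  rw [List.eq_nil_of_length_eq_zero h, mkw_nil]

lemma hLe_refl (x : Heap I) : hLe x x := ⟨1, (mul_one x).symm⟩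
lemma hLe_trans {x y z : Heap I} (h₁ : hLe x y) (h₂ : hLe y z) : hLe x z := by
  obtain ⟨u, rfl⟩ := h₁; obtain ⟨v, rfl⟩ := h₂; exact ⟨u * v, mul_assoc _ _ _⟩
lemma hLe_one (x : Heap I) : hLe 1 x := ⟨x, (one_mul x).symm⟩
lemma eq_one_of_hLe_one {x : Heap I} (h : hLe x 1) : x = 1 := by
  obtain ⟨z, hz⟩ := h
  have : len x + len z = 0 := by rw [← len_mul, ← hz]; exact len_one
  exact eq_one_of_len_eq_zero (Nat.eq_zero_of_add_eq_zero_right this)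
lemma hLe_mul_right (x y : Heap I) : hLe x (x * y) := ⟨y, rfl⟩
lemma hLe_mul_mono {x : Heap I} {y z : Heap I} (h : hLe y z) : hLe (x * y) (x * z) := by
  obtain ⟨u, rfl⟩ := h; exact ⟨u, (mul_assoc _ _ _).symm⟩
lemma hLe_len_le {x y : Heap I} (h : hLe x y) : len x ≤ len y := by
  obtain ⟨u, rfl⟩ := h; rw [len_mul]; omega
lemma hLe_eq_of_len_le {x y : Heap I} (h : hLe x y) (hl : len y ≤ len x) : x = y := by
  obtain ⟨u, rfl⟩ := h
  rw [len_mul] at hl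
  have : u = 1 := eq_one_of_len_eq_zero (by omega)
  rw [this, mul_one]
lemma hLe_cancel (hsymm : ∀ a b : S, I a b → I b a) (hirr : ∀ a : S, ¬ I a a)
    {x y z : Heap I} (h : hLe (x * y) (x * z)) : hLe y z := by
  obtain ⟨w, hw⟩ := h
  rw [mul_assoc] at hw
  exact ⟨w, heap_cancel_left hsymm hirr hw⟩

/-- `a` is a minimal letter of the word `l`. -/
def MinW (I : S → S → Prop) (a : S) (l : List S) : Prop :=
  ∃ p q : List S, l = p ++ a :: q ∧ ∀ b ∈ p, I b a

lemma minW_nil {a : S} : ¬ MinW I a [] := by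
  rintro ⟨p, q, h, -⟩
  have := congrArg List.length h
  simp at this

lemma minW_head (a : S) (l : List S) : MinW I a (a :: l) := ⟨[], l, rfl, by simp⟩

lemma minW_append {a : S} {l₁ l₂ : List S} :
    MinW I a (l₁ ++ l₂) ↔ MinW I a l₁ ∨ ((∀ b ∈ l₁, I b a) ∧ MinW I a l₂) := by
  constructor
  · rintro ⟨p, q, hpq, hp⟩
    rcases List.append_eq_append_iff.mp hpq with ⟨r, hr1, hr2⟩ | ⟨r, hr1, hr2⟩
    · refine Or.inr ⟨fun b hb => hp b (by rw [hr1]; exact List.mem_append_left r hb),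
        r, q, hr2, fun b hb => hp b (by rw [hr1]; exact List.mem_append_right l₁ hb)⟩
    · cases r with
      | nil =>
        rw [List.append_nil] at hr1
        rw [List.nil_append] at hr2
        subst hr1
        exact Or.inr ⟨hp, [], q, by rw [← hr2]; rfl, by simp⟩
      | cons e r' =>
        rw [List.cons_append] at hr2
        obtain ⟨rfl, rfl⟩ : a = e ∧ q = r' ++ l₂ := by
          have h1 := hr2
          injection h1 with h1a h1b
          exact ⟨h1a, h1b⟩
        exact Or.inl ⟨p, r', hr1, fun b hb => hp b hb⟩
  · rintro (⟨p, q, rfl, hp⟩ | ⟨h1, p, q, rfl, hp⟩)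
    · exact ⟨p, q ++ l₂, by simp, hp⟩
    · refine ⟨l₁ ++ p, q, by simp, ?_⟩
      intro b hb
      rcases List.mem_append.mp hb with h | h
      · exact h1 b h
      · exact hp b h

end DevBasic


section DevMin
set_option linter.unusedSectionVars false
variable {S : Type} [DecidableEq S] {I : S → S → Prop}

lemma minW_cons {a b : S} {l : List S} :
    MinW I a (b :: l) ↔ a = b ∨ (I b a ∧ MinW I a l) := by
  have : b :: l = [b] ++ l := rfl
  rw [this, minW_append]
  constructor
  · rintro (⟨p, q, hpq, hp⟩ | ⟨h1, h2⟩)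
    · left
      cases p with
      | nil =>
        injection hpq with h _
        exact h.symm
      | cons e p' =>
        exfalso
        injection hpq with h1 h2
        have := congrArg List.length h2
        simp at this
    · exact Or.inr ⟨h1 b (List.mem_singleton_self b), h2⟩
  · rintro (rfl | ⟨hI, hm⟩)
    · exact Or.inl (minW_head a [])
    · exact Or.inr ⟨fun c hc => (List.mem_singleton.mp hc) ▸ hI, hm⟩

/-- The congruence witnessing invariance of letter-membership and minimality. -/
def minCon (I : S → S → Prop) : Con (FreeMonoid S) where
  r w v := (∀ b : S, b ∈ w.toList ↔ b ∈ v.toList) ∧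
    (∀ a : S, MinW I a w.toList ↔ MinW I a v.toList)
  iseqv := ⟨fun _ => ⟨fun _ => Iff.rfl, fun _ => Iff.rfl⟩,
    fun h => ⟨fun b => (h.1 b).symm, fun a => (h.2 a).symm⟩,
    fun h h' => ⟨fun b => (h.1 b).trans (h'.1 b), fun a => (h.2 a).trans (h'.2 a)⟩⟩
  mul' {w x y z} h₁ h₂ := by
    constructor
    · intro b
      simp only [FreeMonoid.toList_mul, List.mem_append]
      exact or_congr (h₁.1 b) (h₂.1 b)
    · intro a
      simp only [FreeMonoid.toList_mul]
      rw [minW_append, minW_append]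
      refine or_congr (h₁.2 a) (and_congr ?_ (h₂.2 a))
      exact ⟨fun h b hb => h b ((h₁.1 b).mpr hb), fun h b hb => h b ((h₁.1 b).mp hb)⟩

lemma min_invariant (hsymm : ∀ a b : S, I a b → I b a) {w v : FreeMonoid S}
    (h : HeapCon I w v) :
    (∀ b : S, b ∈ w.toList ↔ b ∈ v.toList) ∧
    (∀ a : S, MinW I a w.toList ↔ MinW I a v.toList) := by
  have hle : HeapCon I ≤ minCon I := by
    apply Con.conGen_le.mpr
    rintro x y ⟨c, d, hcd, rfl, rfl⟩
    constructor
    · intro b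
      show b ∈ [c, d] ↔ b ∈ [d, c]
      simp only [List.mem_cons, List.not_mem_nil, or_false]
      tauto
    · intro a
      show MinW I a [c, d] ↔ MinW I a [d, c]
      have e1 : ([c, d] : List S) = c :: [d] := rfl
      have e2 : ([d, c] : List S) = d :: [c] := rfl
      rw [e1, e2, minW_cons, minW_cons, minW_cons, minW_cons]
      simp only [minW_nil, and_false, or_false]
      constructor
      · rintro (rfl | ⟨h1, rfl⟩)
        · exact Or.inr ⟨hsymm _ _ hcd, rfl⟩
        · exact Or.inl rfl
      · rintro (rfl | ⟨h1, rfl⟩)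
        · exact Or.inr ⟨hcd, rfl⟩
        · exact Or.inl rfl
  exact hle h

lemma dvd_sg_iff (hsymm : ∀ a b : S, I a b → I b a) {a : S} {l : List S} :
    hLe (sg I a) (mkw I l) ↔ MinW I a l := by
  constructor
  · rintro ⟨z, hz⟩
    obtain ⟨m, rfl⟩ := heap_exists_rep z
    rw [← mkw_cons, mkw_eq_iff] at hz
    have := (min_invariant hsymm hz).2 a
    simp only [FreeMonoid.toList_ofList] at this
    exact this.mpr (minW_head a m)
  · rintro ⟨p, q, rfl, hp⟩
    have hsw := swapout (I := I) p q hp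
    have : mkw I (p ++ a :: q) = mkw I (a :: (p ++ q)) := mkw_eq_iff.mpr hsw
    rw [this, mkw_cons]
    exact ⟨mkw I (p ++ q), rfl⟩

lemma dvd_mul_iff (hsymm : ∀ a b : S, I a b → I b a) {a : S} {x y : Heap I} :
    hLe (sg I a) (x * y) ↔
      hLe (sg I a) x ∨ ((∀ c : S, 0 < occ c x → I c a) ∧ hLe (sg I a) y) := by
  obtain ⟨l, rfl⟩ := heap_exists_rep x
  obtain ⟨m, rfl⟩ := heap_exists_rep y
  rw [← mkw_append, dvd_sg_iff hsymm, dvd_sg_iff hsymm, dvd_sg_iff hsymm, minW_append]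
  refine or_congr Iff.rfl (and_congr ?_ Iff.rfl)
  constructor
  · intro h c hc
    exact h c (occ_pos_iff.mp hc)
  · intro h c hc
    exact h c (occ_pos_iff.mpr hc)

lemma sg_comm_heap {a : S} {x : Heap I} (h : ∀ c : S, 0 < occ c x → I c a) :
    x * sg I a = sg I a * x := by
  obtain ⟨l, rfl⟩ := heap_exists_rep x
  have h' : ∀ c ∈ l, I c a := fun c hc => h c (occ_pos_iff.mpr hc)
  have hsw := swapout (I := I) l [] h'
  have : mkw I (l ++ [a]) = mkw I (a :: (l ++ [])) := mkw_eq_iff.mpr hsw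
  rw [List.append_nil, mkw_cons, mkw_append] at this
  have e1 : mkw I [a] = sg I a := rfl
  rw [e1] at this
  exact this

lemma sg_inj {a b : S} (h : sg I a = sg I b) : a = b := by
  by_contra hab
  have := congrArg (occ a) h
  rw [occ_sg, occ_sg, if_pos rfl, if_neg (fun hh => hab hh.symm)] at this
  exact one_ne_zero this

lemma hLe_sg_sg {a b : S} (h : hLe (sg I a) (sg I b)) : a = b := by
  have := hLe_eq_of_len_le h (by rw [len_sg, len_sg])
  exact sg_inj this

lemma occ_pos_of_dvd {a : S} {x : Heap I} (h : hLe (sg I a) x) : 0 < occ a x := by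
  obtain ⟨z, rfl⟩ := h
  rw [occ_mul, occ_sg, if_pos rfl]
  omega

lemma exists_sg_dvd {x : Heap I} (h : x ≠ 1) : ∃ a : S, hLe (sg I a) x := by
  obtain ⟨l, rfl⟩ := heap_exists_rep x
  cases l with
  | nil => exact absurd mkw_nil h
  | cons a l₁ => exact ⟨a, by rw [mkw_cons]; exact hLe_mul_right _ _⟩

end DevMin


section DevClique
set_option linter.unusedSectionVars false
variable {S : Type} [DecidableEq S] {I : S → S → Prop}

lemma cl_subset {γ : Cl I} {s : Finset S} (h : s ⊆ γ.1) :
    ∀ a ∈ s, ∀ b ∈ s, a ≠ b → I a b :=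
  fun a ha b hb hab => γ.2 a (h ha) b (h hb) hab

lemma heap_congr {γ δ : Cl I} (h : γ.1 = δ.1) : γ.heap = δ.heap := by
  cases γ; cases δ; cases h; rfl

lemma heap_emptyCl : (emptyCl I).heap = 1 := Finset.noncommProd_empty _ _

lemma heap_eq_one_of_empty {γ : Cl I} (h : γ.1 = ∅) : γ.heap = 1 := by
  rw [heap_congr (δ := emptyCl I) h]; exact heap_emptyCl

lemma sg_commute (a b : S) (h : a ≠ b → I a b) :
    Commute ((HeapCon I).mk' (FreeMonoid.of a)) ((HeapCon I).mk' (FreeMonoid.of b)) := by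
  by_cases hab : a = b
  · subst hab; rfl
  · show _ * _ = _ * _
    rw [← map_mul, ← map_mul]
    exact (Con.eq _).mpr (hc_swap (h hab))

lemma heap_extract {γ : Cl I} {a : S} (ha : a ∈ γ.1) :
    ∃ δ : Cl I, δ.1 = γ.1.erase a ∧ γ.heap = sg I a * δ.heap := by
  refine ⟨⟨γ.1.erase a, cl_subset (Finset.erase_subset a γ.1)⟩, rfl, ?_⟩
  exact (Finset.mul_noncommProd_erase γ.1 ha _ _).symm

lemma sg_dvd_heap {γ : Cl I} {a : S} (ha : a ∈ γ.1) : hLe (sg I a) γ.heap := by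
  obtain ⟨δ, -, hδ⟩ := heap_extract ha
  exact hδ ▸ hLe_mul_right _ _

lemma heap_split (γ : Cl I) (s : Finset S) (hs : s ⊆ γ.1) :
    γ.heap = Cl.heap ⟨s, cl_subset hs⟩ *
      Cl.heap ⟨γ.1 \ s, cl_subset (Finset.sdiff_subset)⟩ := by
  have hu : γ.1 = s ∪ (γ.1 \ s) := (Finset.union_sdiff_of_subset hs).symm
  have hdis : Disjoint s (γ.1 \ s) := Finset.disjoint_sdiff
  have hcomm : {x | x ∈ s ∪ (γ.1 \ s)}.Pairwise
      (Function.onFun Commute fun a : S => (HeapCon I).mk' (FreeMonoid.of a)) := by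
    intro x hx y hy hxy
    simp only [Set.mem_setOf_eq, ← hu] at hx hy
    exact sg_commute x y (fun hne => γ.2 x hx y hy hne)
  rw [heap_congr (δ := ⟨s ∪ (γ.1 \ s), hu ▸ γ.2⟩) hu]
  exact Finset.noncommProd_union_of_disjoint hdis _ hcomm

lemma heap_split' (γ : Cl I) (s : Finset S) (hs : s ⊆ γ.1) (α β : Cl I)
    (hα : α.1 = s) (hβ : β.1 = γ.1 \ s) : γ.heap = α.heap * β.heap := by
  rw [heap_split γ s hs,
    heap_congr (γ := (⟨s, cl_subset hs⟩ : Cl I)) (δ := α) hα.symm,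
    heap_congr (γ := (⟨γ.1 \ s, cl_subset Finset.sdiff_subset⟩ : Cl I)) (δ := β) hβ.symm]

lemma len_noncommProd (s : Finset S) :
    ∀ comm, len (s.noncommProd (fun a : S => (HeapCon I).mk' (FreeMonoid.of a)) comm)
      = s.card := by
  induction s using Finset.cons_induction_on with
  | empty => intro comm; erw [Finset.noncommProd_empty]; simpa using len_one
  | @cons a s ha ih =>
    intro comm
    erw [Finset.noncommProd_cons, len_mul]
    have h1 : len ((HeapCon I).mk' (FreeMonoid.of a)) = 1 := len_sg a
    rw [h1, ih, Finset.card_cons]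
    omega

lemma len_heap (γ : Cl I) : len γ.heap = γ.1.card := len_noncommProd γ.1 _

lemma occ_noncommProd (b : S) (s : Finset S) :
    ∀ comm, occ b (s.noncommProd (fun a : S => (HeapCon I).mk' (FreeMonoid.of a)) comm)
      = if b ∈ s then 1 else 0 := by
  induction s using Finset.cons_induction_on with
  | empty => intro comm; erw [Finset.noncommProd_empty]; simpa using occ_one b
  | @cons a s ha ih =>
    intro comm
    erw [Finset.noncommProd_cons, occ_mul]
    have : occ b ((HeapCon I).mk' (FreeMonoid.of a)) = if a = b then 1 else 0 := occ_sg b a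
    rw [this, ih]
    simp only [Finset.mem_cons]
    by_cases h1 : a = b <;> by_cases h2 : b ∈ s
    · subst h1; exact absurd h2 ha
    · rw [if_pos h1, if_neg h2, if_pos (Or.inl h1.symm)]
    · rw [if_neg h1, if_pos h2, if_pos (Or.inr h2)]
    · rw [if_neg h1, if_neg h2, if_neg (by rintro (h | h); exact h1 h.symm; exact h2 h)]

lemma occ_heap (b : S) (γ : Cl I) : occ b γ.heap = if b ∈ γ.1 then 1 else 0 :=
  occ_noncommProd b γ.1 _

lemma heap_inj {γ δ : Cl I} (h : γ.heap = δ.heap) : γ = δ := by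
  apply Subtype.ext
  ext a
  have := congrArg (occ a) h
  rw [occ_heap, occ_heap] at this
  by_cases h1 : a ∈ γ.1 <;> by_cases h2 : a ∈ δ.1 <;> simp [h1, h2] at this ⊢

lemma mem_of_sg_dvd_heap {γ : Cl I} {a : S} (h : hLe (sg I a) γ.heap) : a ∈ γ.1 := by
  have := occ_pos_of_dvd h
  rw [occ_heap] at this
  by_contra hc
  rw [if_neg hc] at this
  omega

lemma cl_dvd (hsymm : ∀ a b : S, I a b → I b a) :
    ∀ (n : ℕ) (γ : Cl I) (x : Heap I), γ.1.card = n →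
    (∀ a ∈ γ.1, hLe (sg I a) x) → hLe γ.heap x := by
  intro n
  induction n with
  | zero =>
    intro γ x hcard _
    rw [heap_eq_one_of_empty (Finset.card_eq_zero.mp hcard)]
    exact hLe_one x
  | succ n ih =>
    intro γ x hcard hdvd
    have hne : γ.1.Nonempty := Finset.card_pos.mp (by omega)
    obtain ⟨a, ha⟩ := hne
    obtain ⟨x', hx'⟩ := hdvd a ha
    obtain ⟨δ, hδ1, hδ2⟩ := heap_extract ha
    have hb : ∀ b ∈ δ.1, hLe (sg I b) x' := by
      intro b hb'
      rw [hδ1] at hb'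
      have hbγ : b ∈ γ.1 := Finset.mem_of_mem_erase hb'
      have hbne : b ≠ a := Finset.ne_of_mem_erase hb'
      have hdb := hdvd b hbγ
      rw [hx'] at hdb
      rcases (dvd_mul_iff hsymm).mp hdb with h | h
      · exact absurd (hLe_sg_sg h) hbne
      · exact h.2
    have hcard' : δ.1.card = n := by
      rw [hδ1, Finset.card_erase_of_mem ha, hcard]
      omega
    have := ih δ x' hcard' hb
    rw [hx', hδ2]
    exact hLe_mul_mono this

lemma cl_comm_heap {γ : Cl I} {y : Heap I}
    (h : ∀ a ∈ γ.1, ∀ c : S, 0 < occ c y → I c a) : y * γ.heap = γ.heap * y := by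
  obtain ⟨n, hn⟩ : ∃ n, γ.1.card = n := ⟨_, rfl⟩
  induction n generalizing γ with
  | zero =>
    rw [heap_eq_one_of_empty (Finset.card_eq_zero.mp hn), one_mul, mul_one]
  | succ n ih =>
    obtain ⟨a, ha⟩ := Finset.card_pos.mp (show 0 < γ.1.card by omega)
    obtain ⟨δ, hδ1, hδ2⟩ := heap_extract ha
    have hcomm : y * sg I a = sg I a * y := sg_comm_heap (h a ha)
    have hδcomm := ih (γ := δ)
      (fun b hb => h b (Finset.mem_of_mem_erase (hδ1 ▸ hb)))
      (by rw [hδ1, Finset.card_erase_of_mem ha, hn]; omega)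
    rw [hδ2, ← mul_assoc, hcomm, mul_assoc, hδcomm, mul_assoc]

end DevClique

section DevPpSeq
set_option linter.unusedSectionVars false
variable {S : Type} [DecidableEq S] {I : S → S → Prop}

lemma ppSeq_zero (c : ℕ → Cl I) : ppSeq c 0 = 1 := rfl

lemma ppSeq_succ (c : ℕ → Cl I) (n : ℕ) : ppSeq c (n + 1) = ppSeq c n * (c n).heap := by
  unfold ppSeq
  rw [List.range_succ, List.map_append, List.prod_append]
  simp

lemma ppSeq_one (c : ℕ → Cl I) : ppSeq c 1 = (c 0).heap := by
  rw [ppSeq_succ, ppSeq_zero, one_mul]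

lemma ppSeq_succ' (c : ℕ → Cl I) (n : ℕ) :
    ppSeq c (n + 1) = (c 0).heap * ppSeq (fun i => c (i + 1)) n := by
  induction n with
  | zero => rw [ppSeq_one, ppSeq_zero, mul_one]
  | succ n ih =>
    rw [ppSeq_succ, ih, ppSeq_succ (fun i => c (i + 1)) n, mul_assoc]

lemma ppSeq_le (c : ℕ → Cl I) {m n : ℕ} (h : m ≤ n) : hLe (ppSeq c m) (ppSeq c n) := by
  induction n with
  | zero =>
    have : m = 0 := by omega
    subst this; exact hLe_refl _
  | succ n ih =>
    rcases Nat.lt_or_ge m (n + 1) with h' | h'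
    · exact hLe_trans (ih (by omega)) (by rw [ppSeq_succ]; exact hLe_mul_right _ _)
    · have : m = n + 1 := by omega
      subst this; exact hLe_refl _

lemma ppSeq_congr {c d : ℕ → Cl I} : ∀ {n : ℕ}, (∀ j < n, c j = d j) → ppSeq c n = ppSeq d n := by
  intro n
  induction n with
  | zero => intro _; rfl
  | succ n ih =>
    intro h
    rw [ppSeq_succ, ppSeq_succ, ih (fun j hj => h j (by omega)), h n (by omega)]

lemma len_ppSeq_le [Fintype S] (c : ℕ → Cl I) (n : ℕ) :
    len (ppSeq c n) ≤ n * Fintype.card S := by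
  induction n with
  | zero => rw [ppSeq_zero, len_one]; omega
  | succ n ih =>
    rw [ppSeq_succ, len_mul, len_heap]
    have h2 : (c n).1.card ≤ Fintype.card S := Finset.card_le_univ (c n).1
    have e : (n + 1) * Fintype.card S = n * Fintype.card S + Fintype.card S := by ring
    omega

lemma len_ppSeq_ge (c : ℕ → Cl I) (hne : ∀ i, (c i).1.Nonempty) (n : ℕ) :
    n ≤ len (ppSeq c n) := by
  induction n with
  | zero => omega
  | succ n ih =>
    rw [ppSeq_succ, len_mul, len_heap]
    have := Finset.card_pos.mpr (hne n)
    omega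

lemma ppSeq_stable {c : ℕ → Cl I} {j : ℕ} (h : ∀ i, j ≤ i → c i = emptyCl I) :
    ∀ {m : ℕ}, j ≤ m → ppSeq c m = ppSeq c j := by
  intro m hm
  induction m with
  | zero =>
    have : j = 0 := by omega
    subst this; rfl
  | succ m ih =>
    rcases Nat.lt_or_ge j (m + 1) with h' | h'
    · rw [ppSeq_succ, h m (by omega), heap_emptyCl, mul_one]
      exact ih (by omega)
    · have : j = m + 1 := by omega
      subst this; rfl

/-- Prepend a clique to a sequence. -/
def clCons (γ : Cl I) (c : ℕ → Cl I) : ℕ → Cl I := fun i => match i with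
  | 0 => γ
  | i + 1 => c i

lemma ppSeq_clCons (γ : Cl I) (c : ℕ → Cl I) (n : ℕ) :
    ppSeq (clCons γ c) (n + 1) = γ.heap * ppSeq c n := by
  rw [ppSeq_succ']
  rfl

end DevPpSeq


section DevCF
set_option linter.unusedSectionVars false
variable {S : Type} [DecidableEq S] {I : S → S → Prop}
variable (hsymm : ∀ a b : S, I a b → I b a) (hirr : ∀ a : S, ¬ I a a)
variable (hCF : ∀ x : Heap I, ∃! c : ℕ → Cl I, CFprop I c x)

lemma ppSeq_emptyCl (n : ℕ) : ppSeq (fun _ : ℕ => emptyCl I) n = 1 := by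
  have := ppSeq_stable (c := fun _ : ℕ => emptyCl I) (j := 0) (fun _ _ => rfl)
    (Nat.zero_le n)
  rw [this, ppSeq_zero]

include hsymm hirr hCF

lemma cf_spec (x : Heap I) : CFprop I (cf I x) x := by
  unfold cf
  rw [dif_pos ((hCF x).exists)]
  exact ((hCF x).exists).choose_spec

lemma cf_eq {c : ℕ → Cl I} {x : Heap I} (h : CFprop I c x) : cf I x = c :=
  (hCF x).unique (cf_spec hsymm hirr hCF x) h

lemma cf_one : cf I 1 = fun _ => emptyCl I := by
  apply cf_eq hsymm hirr hCF
  refine ⟨fun n b hb => ?_, 0, fun n _ => ⟨ppSeq_emptyCl n, rfl⟩⟩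
  exact absurd hb (by simp [emptyCl])

lemma cf_self (x : Heap I) : ∃ N, ∀ n, N ≤ n → ppSeq (cf I x) n = x := by
  obtain ⟨-, N, hN⟩ := cf_spec hsymm hirr hCF x
  exact ⟨N, fun n hn => (hN n hn).1⟩

lemma cf_le_self (x : Heap I) (k : ℕ) : hLe (ppSeq (cf I x) k) x := by
  obtain ⟨N, hN⟩ := cf_self hsymm hirr hCF x
  have h1 := ppSeq_le (cf I x) (le_max_left k N)
  rw [hN (max k N) (le_max_right k N)] at h1
  exact h1

lemma min_mem {c : ℕ → Cl I} (hadm : ∀ n, Move (c n) (c (n + 1))) :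
    ∀ n : ℕ, 1 ≤ n → ∀ a : S, (hLe (sg I a) (ppSeq c n) ↔ a ∈ (c 0).1) := by
  intro n
  induction n with
  | zero => omega
  | succ n ih =>
    intro _ a
    constructor
    · intro h
      rcases Nat.eq_zero_or_pos n with rfl | hpos
      · rw [ppSeq_one] at h; exact mem_of_sg_dvd_heap h
      · rw [ppSeq_succ] at h
        rcases (dvd_mul_iff hsymm).mp h with h' | ⟨hind, hmem⟩
        · exact (ih hpos a).mp h'
        · exfalso
          have hmem' : a ∈ (c n).1 := mem_of_sg_dvd_heap hmem
          have hmv := hadm (n - 1)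
          rw [Nat.sub_add_cancel hpos] at hmv
          obtain ⟨b, hb, hbn⟩ := hmv a hmem'
          have hbl : 0 < occ b (ppSeq c n) := by
            have hn1 : n = (n - 1) + 1 := by omega
            rw [hn1, ppSeq_succ, occ_mul, occ_heap, if_pos hb]
            omega
          exact hbn (hind b hbl)
    · intro ha
      have h1 : hLe (sg I a) (ppSeq c 1) := by rw [ppSeq_one]; exact sg_dvd_heap ha
      exact hLe_trans h1 (ppSeq_le c (by omega))

lemma cf_zero_mem {x : Heap I} (hx : x ≠ 1) {a : S} :
    a ∈ (cf I x 0).1 ↔ hLe (sg I a) x := by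
  obtain ⟨hadm, N, hN⟩ := cf_spec hsymm hirr hCF x
  have hN1 : ppSeq (cf I x) (max N 1) = x := (hN _ (le_max_left _ _)).1
  have h2 := (min_mem hsymm hirr hCF hadm (max N 1) (le_max_right _ _) a).symm
  rw [hN1] at h2
  exact h2

lemma cf_shift (x : Heap I) : ∃ x' : Heap I, x = (cf I x 0).heap * x' ∧
    cf I x' = fun n => cf I x (n + 1) := by
  obtain ⟨hadm, N, hN⟩ := cf_spec hsymm hirr hCF x
  refine ⟨ppSeq (fun i => cf I x (i + 1)) N, ?_, ?_⟩
  · have h1 := (hN (N + 1) (by omega)).1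
    rw [ppSeq_succ'] at h1
    exact h1.symm
  · apply cf_eq hsymm hirr hCF
    refine ⟨fun n => hadm (n + 1), N, fun n hn => ⟨?_, (hN (n + 1) (by omega)).2⟩⟩
    have h1 : (cf I x 0).heap * ppSeq (fun i => cf I x (i + 1)) n
        = (cf I x 0).heap * ppSeq (fun i => cf I x (i + 1)) N := by
      rw [← ppSeq_succ', ← ppSeq_succ', (hN (n + 1) (by omega)).1, (hN (N + 1) (by omega)).1]
    exact heap_cancel_left hsymm hirr h1

lemma clq_sub : ∀ (k : ℕ) (c : ℕ → Cl I) (φ : Cl I), hLe φ.heap (ppSeq c k) →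
    ∃ c' : ℕ → Cl I, ppSeq c k = φ.heap * ppSeq c' k := by
  intro k
  induction k with
  | zero =>
    intro c φ h
    rw [ppSeq_zero] at h ⊢
    rw [eq_one_of_hLe_one h]
    exact ⟨c, by rw [ppSeq_zero, one_mul]⟩
  | succ k ih =>
    intro c φ h
    rw [ppSeq_succ'] at h ⊢
    set γ₀ := c 0 with hγ₀
    set s₁ := ppSeq (fun i => c (i + 1)) k with hs₁
    have hdvd : ∀ a ∈ φ.1, hLe (sg I a) (γ₀.heap * s₁) :=
      fun a ha => hLe_trans (sg_dvd_heap ha) h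
    have hφ'div : ∀ a ∈ φ.1 \ γ₀.1, (∀ e, 0 < occ e γ₀.heap → I e a) ∧ hLe (sg I a) s₁ := by
      intro a ha
      obtain ⟨ha1, ha2⟩ := Finset.mem_sdiff.mp ha
      rcases (dvd_mul_iff hsymm).mp (hdvd a ha1) with h' | h'
      · exact absurd (mem_of_sg_dvd_heap h') ha2
      · exact h'
    set φ' : Cl I := ⟨φ.1 \ γ₀.1, cl_subset Finset.sdiff_subset⟩ with hφ'
    have hφ's : hLe φ'.heap s₁ :=
      cl_dvd hsymm φ'.1.card φ' s₁ rfl (fun a ha => (hφ'div a ha).2)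
    obtain ⟨c'', hc''⟩ := ih (fun i => c (i + 1)) φ' hφ's
    set d0 : Cl I := ⟨γ₀.1 \ φ.1, cl_subset Finset.sdiff_subset⟩ with hd0
    refine ⟨clCons d0 c'', ?_⟩
    rw [← hs₁] at hc''
    rw [ppSeq_clCons, hc'']
    have key : γ₀.heap * φ'.heap = φ.heap * d0.heap := by
      set φ2 : Cl I := ⟨φ.1 ∩ γ₀.1, cl_subset Finset.inter_subset_left⟩ with hφ2
      have hsplitφ : φ.heap = φ2.heap * φ'.heap :=
        heap_split' φ (φ.1 ∩ γ₀.1) Finset.inter_subset_left φ2 φ' rfl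
          (Finset.sdiff_inter_self_left φ.1 γ₀.1).symm
      have hsplitγ : γ₀.heap = φ2.heap * d0.heap :=
        heap_split' γ₀ (γ₀.1 ∩ φ.1) Finset.inter_subset_left φ2 d0
          (Finset.inter_comm _ _) (Finset.sdiff_inter_self_left γ₀.1 φ.1).symm
      have hcomm : d0.heap * φ'.heap = φ'.heap * d0.heap := by
        apply cl_comm_heap
        intro a ha e he
        have hed : e ∈ d0.1 := by
          by_contra hc
          rw [occ_heap, if_neg hc] at he
          omega
        have heγ : e ∈ γ₀.1 := (Finset.mem_sdiff.mp hed).1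
        exact (hφ'div a ha).1 e (by rw [occ_heap, if_pos heγ]; omega)
      rw [hsplitγ, hsplitφ, mul_assoc, mul_assoc, hcomm]
    rw [← mul_assoc, ← mul_assoc, key]

lemma maxk : ∀ (k : ℕ) (u t : Heap I) (c : ℕ → Cl I), u = ppSeq c k → hLe u t →
    hLe u (ppSeq (cf I t) k) := by
  intro k
  induction k with
  | zero =>
    intro u t c hu _
    rw [hu, ppSeq_zero]
    exact hLe_one _
  | succ k ih =>
    -- the key sub-lemma
    have sub : ∀ (ε : Cl I) (s : Heap I),
        hLe (ppSeq (cf I (ε.heap * s)) k) (ε.heap * ppSeq (cf I s) k) := by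
      intro ε s
      cases k with
      | zero => rw [ppSeq_zero]; exact hLe_one _
      | succ k' =>
        by_cases hw1 : ε.heap * s = 1
        · rw [hw1, cf_one hsymm hirr hCF, ppSeq_emptyCl]
          exact hLe_one _
        · set w := ε.heap * s with hwdef
          set δ := cf I w 0 with hδdef
          have hεδ : ε.1 ⊆ δ.1 := by
            intro a ha
            rw [hδdef, cf_zero_mem hsymm hirr hCF hw1]
            exact hLe_trans (sg_dvd_heap ha) ⟨s, rfl⟩
          have hφdvd : ∀ a ∈ δ.1 \ ε.1,
              (∀ e, 0 < occ e ε.heap → I e a) ∧ hLe (sg I a) s := by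
            intro a ha
            obtain ⟨ha1, ha2⟩ := Finset.mem_sdiff.mp ha
            rw [hδdef] at ha1
            have hda : hLe (sg I a) w := (cf_zero_mem hsymm hirr hCF hw1).mp ha1
            rw [hwdef] at hda
            rcases (dvd_mul_iff hsymm).mp hda with h' | h'
            · exact absurd (mem_of_sg_dvd_heap h') ha2
            · exact h'
          set φ : Cl I := ⟨δ.1 \ ε.1, cl_subset Finset.sdiff_subset⟩ with hφdef
          have hφs : hLe φ.heap s :=
            cl_dvd hsymm φ.1.card φ s rfl (fun a ha => (hφdvd a ha).2)
          obtain ⟨s', hs'⟩ := hφs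
          have hδsplit : δ.heap = ε.heap * φ.heap :=
            heap_split' δ ε.1 hεδ ε φ rfl rfl
          obtain ⟨w', hw'1, hw'2⟩ := cf_shift hsymm hirr hCF w
          rw [← hδdef] at hw'1
          have hws' : w = δ.heap * s' := by
            rw [hδsplit, mul_assoc, ← hs', hwdef]
          have hw's' : w' = s' := by
            apply heap_cancel_left hsymm hirr (x := δ.heap)
            rw [← hw'1, ← hws']
          have hrec : ppSeq (cf I w) (k' + 1) = δ.heap * ppSeq (cf I w') k' := by
            rw [ppSeq_succ', ← hw'2, ← hδdef]
          have hinner : hLe (φ.heap * ppSeq (cf I s') k') (ppSeq (cf I s) (k' + 1)) := by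
            apply ih _ s (clCons φ (cf I s')) (ppSeq_clCons _ _ _).symm
            have h1 : hLe (φ.heap * ppSeq (cf I s') k') (φ.heap * s') :=
              hLe_mul_mono (cf_le_self hsymm hirr hCF s' k')
            rwa [← hs'] at h1
          rw [hrec, hw's', hδsplit, mul_assoc]
          exact hLe_mul_mono hinner
    -- the main step
    intro u t c hu hut
    by_cases hu1 : u = 1
    · rw [hu1]; exact hLe_one _
    have ht1 : t ≠ 1 := by
      intro h
      exact hu1 (eq_one_of_hLe_one (h ▸ hut))
    set γ := cf I u 0 with hγdef
    set δ := cf I t 0 with hδdef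
    have hγδ : γ.1 ⊆ δ.1 := by
      intro a ha
      rw [hδdef, cf_zero_mem hsymm hirr hCF ht1]
      rw [hγdef] at ha
      exact hLe_trans ((cf_zero_mem hsymm hirr hCF hu1).mp ha) hut
    obtain ⟨u₁, hu₁, hcfu₁⟩ := cf_shift hsymm hirr hCF u
    rw [← hγdef] at hu₁
    obtain ⟨t₁, ht₁, hcft₁⟩ := cf_shift hsymm hirr hCF t
    rw [← hδdef] at ht₁
    have hc0γ : (c 0).1 ⊆ γ.1 := by
      intro a ha
      rw [hγdef, cf_zero_mem hsymm hirr hCF hu1]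
      have h2 : hLe (sg I a) (ppSeq c (k + 1)) := by
        rw [ppSeq_succ']
        exact hLe_trans (sg_dvd_heap ha) (hLe_mul_right _ _)
      rwa [← hu] at h2
    have hg'dvd : ∀ a ∈ γ.1 \ (c 0).1, hLe (sg I a) (ppSeq (fun i => c (i + 1)) k) := by
      intro a ha
      obtain ⟨ha1, ha2⟩ := Finset.mem_sdiff.mp ha
      rw [hγdef] at ha1
      have hda : hLe (sg I a) u := (cf_zero_mem hsymm hirr hCF hu1).mp ha1
      rw [hu, ppSeq_succ'] at hda
      rcases (dvd_mul_iff hsymm).mp hda with h' | h'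
      · exact absurd (mem_of_sg_dvd_heap h') ha2
      · exact h'.2
    set g' : Cl I := ⟨γ.1 \ (c 0).1, cl_subset Finset.sdiff_subset⟩ with hg'def
    have hg's : hLe g'.heap (ppSeq (fun i => c (i + 1)) k) :=
      cl_dvd hsymm g'.1.card g' _ rfl hg'dvd
    obtain ⟨c₂, hc₂⟩ := clq_sub hsymm hirr hCF k (fun i => c (i + 1)) g' hg's
    have hγsplit : γ.heap = (c 0).heap * g'.heap :=
      heap_split' γ (c 0).1 hc0γ (c 0) g' rfl rfl
    have hu₁eq : u₁ = ppSeq c₂ k := by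
      apply heap_cancel_left hsymm hirr (x := γ.heap)
      rw [← hu₁, hu, ppSeq_succ', hc₂, hγsplit, mul_assoc]
    set ε : Cl I := ⟨δ.1 \ γ.1, cl_subset Finset.sdiff_subset⟩ with hεdef
    have hδsplit : δ.heap = γ.heap * ε.heap :=
      heap_split' δ γ.1 hγδ γ ε rfl rfl
    have hu₁t : hLe u₁ (ε.heap * t₁) := by
      obtain ⟨q, hq⟩ := hut
      refine ⟨q, ?_⟩
      apply heap_cancel_left hsymm hirr (x := γ.heap)
      have e1 : γ.heap * (ε.heap * t₁) = t := by rw [← mul_assoc, ← hδsplit, ← ht₁]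
      have e2 : γ.heap * (u₁ * q) = t := by rw [← mul_assoc, ← hu₁, ← hq]
      rw [e1, e2]
    have hih := ih u₁ (ε.heap * t₁) c₂ hu₁eq hu₁t
    have hsub := sub ε t₁
    have hfinal : hLe u₁ (ε.heap * ppSeq (cf I t₁) k) := hLe_trans hih hsub
    have hgoal : ppSeq (cf I t) (k + 1) = γ.heap * (ε.heap * ppSeq (cf I t₁) k) := by
      rw [ppSeq_succ', ← hcft₁, ← hδdef, hδsplit, mul_assoc]
    rw [hgoal, hu₁]
    exact hLe_mul_mono hfinal

lemma cf_mono {u t : Heap I} (h : hLe u t) (m : ℕ) :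
    hLe (ppSeq (cf I u) m) (ppSeq (cf I t) m) :=
  maxk hsymm hirr hCF m (ppSeq (cf I u) m) t (cf I u) rfl
    (hLe_trans (cf_le_self hsymm hirr hCF u m) h)

end DevCF


section DevBnd
set_option linter.unusedSectionVars false
variable {S : Type} [Fintype S] [DecidableEq S] {I : S → S → Prop}

lemma mle_def {ζ ζ' : MB I} : mLe ζ ζ' ↔ ∀ n, hLe (pp ζ n) (pp ζ' n) := Iff.rfl

lemma pp_inl (x : Heap I) (n : ℕ) : pp (Sum.inl x : MB I) n = ppSeq (cf I x) n := rfl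
lemma pp_inr (ξ : Bnd I) (n : ℕ) : pp (Sum.inr ξ : MB I) n = ppSeq ξ.1 n := rfl

lemma mem_cyl_def {x : Heap I} {ξ : Bnd I} :
    ξ ∈ cyl x ↔ mLe (Sum.inl x) (Sum.inr ξ) := Iff.rfl

lemma ppSeq_padded (c : ℕ → Cl I) (n m : ℕ) :
    ppSeq (fun i => if i < n then c i else emptyCl I) m = ppSeq c (min m n) := by
  induction m with
  | zero => rw [ppSeq_zero]; rw [Nat.min_comm]; rw [Nat.min_zero]; rw [ppSeq_zero]
  | succ m ih =>
    by_cases h : m < n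
    · rw [ppSeq_succ, ih, if_pos h]
      have h1 : min (m + 1) n = m + 1 := by omega
      have h2 : min m n = m := by omega
      rw [h1, h2, ppSeq_succ]
    · rw [ppSeq_succ, ih, if_neg h, heap_emptyCl, mul_one]
      congr 1
      omega

lemma move_empty {γ : Cl I} (h : Move (emptyCl I) γ) : γ = emptyCl I := by
  apply Subtype.ext
  show γ.1 = (∅ : Finset S)
  rw [Finset.eq_empty_iff_forall_notMem]
  intro b hb
  obtain ⟨a, ha, -⟩ := h b hb
  exact absurd ha (by simp [emptyCl])

lemma nat_seq_max {g : ℕ → ℕ} {B : ℕ} (hB : ∀ n, g n ≤ B) : ∃ N, ∀ n, g n ≤ g N := by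
  have hne : (Set.range g).Nonempty := ⟨g 0, ⟨0, rfl⟩⟩
  have hbdd : BddAbove (Set.range g) := ⟨B, by rintro y ⟨n, rfl⟩; exact hB n⟩
  obtain ⟨N, hN⟩ := Nat.sSup_mem hne hbdd
  exact ⟨N, fun n => hN ▸ le_csSup hbdd ⟨n, rfl⟩⟩

variable (hsymm : ∀ a b : S, I a b → I b a) (hirr : ∀ a : S, ¬ I a a)
variable (hCF : ∀ x : Heap I, ∃! c : ℕ → Cl I, CFprop I c x)
include hsymm hirr hCF

lemma cf_padded (ξ : Bnd I) (n : ℕ) :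
    cf I (ppSeq ξ.1 n) = fun i => if i < n then ξ.1 i else emptyCl I := by
  apply cf_eq hsymm hirr hCF
  constructor
  · intro i
    by_cases h1 : i + 1 < n
    · have h0 : i < n := by omega
      simp only [if_pos h0, if_pos h1]
      exact ξ.2.2 i
    · by_cases h0 : i < n
      · simp only [if_pos h0, if_neg h1]
        intro b hb
        exact absurd hb (by simp [emptyCl])
      · simp only [if_neg h0, if_neg h1]
        intro b hb
        exact absurd hb (by simp [emptyCl])
  · refine ⟨n, fun m hm => ⟨?_, if_neg (by omega)⟩⟩
    rw [ppSeq_padded]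
    congr 1
    omega

lemma cf_empty_tail {y : Heap I} {j : ℕ} (h : cf I y j = emptyCl I) :
    ∀ m, j ≤ m → cf I y m = emptyCl I := by
  intro m hm
  induction m with
  | zero =>
    have : j = 0 := by omega
    exact this ▸ h
  | succ m ih =>
    rcases Nat.lt_or_ge j (m + 1) with h' | h'
    · have hm' : cf I y m = emptyCl I := ih (by omega)
      have := (cf_spec hsymm hirr hCF y).1 m
      rw [hm'] at this
      exact move_empty this
    · have : j = m + 1 := by omega
      exact this ▸ h

lemma mle_inl_inr {y : Heap I} {ξ : Bnd I} :
    mLe (Sum.inl y) (Sum.inr ξ) ↔ ∃ n : ℕ, hLe y (ppSeq ξ.1 n) := by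
  unfold mLe
  constructor
  · intro h
    obtain ⟨N, hN⟩ := cf_self hsymm hirr hCF y
    refine ⟨N, ?_⟩
    have h2 := h N
    rw [pp_inl, pp_inr, hN N le_rfl] at h2
    exact h2
  · rintro ⟨n, hn⟩ m
    rw [pp_inl, pp_inr]
    have h1 : hLe y (ppSeq ξ.1 (max n m)) := hLe_trans hn (ppSeq_le _ (le_max_left n m))
    have h2 := cf_mono hsymm hirr hCF h1 m
    rw [cf_padded hsymm hirr hCF ξ (max n m), ppSeq_padded] at h2
    have h3 : min m (max n m) = m := by omega
    rwa [h3] at h2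

lemma mle_inl_inl {x y : Heap I} : mLe (Sum.inl x : MB I) (Sum.inl y) ↔ hLe x y := by
  unfold mLe
  constructor
  · intro h
    obtain ⟨N, hN⟩ := cf_self hsymm hirr hCF x
    obtain ⟨M, hM⟩ := cf_self hsymm hirr hCF y
    have h2 := h (max N M)
    rw [pp_inl, pp_inl, hN _ (le_max_left N M), hM _ (le_max_right N M)] at h2
    exact h2
  · intro h m
    rw [pp_inl, pp_inl]
    exact cf_mono hsymm hirr hCF h m

lemma mem_cyl {x : Heap I} {ξ : Bnd I} :
    ξ ∈ cyl x ↔ ∃ n : ℕ, hLe x (ppSeq ξ.1 n) :=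
  (mem_cyl_def).trans (mle_inl_inr hsymm hirr hCF)

lemma cyl_mono {x y : Heap I} (h : hLe x y) : cyl (I := I) y ⊆ cyl x := by
  intro ξ hξ
  rw [mem_cyl hsymm hirr hCF] at hξ ⊢
  obtain ⟨n, hn⟩ := hξ
  exact ⟨n, hLe_trans h hn⟩

/-- The master lemma on concatenations: the concatenation lies in the cylinder of its
base, and satisfies the two key cylinder correspondences. -/
lemma concB_spec (hconc : ∀ (x : Heap I) (ξ : Bnd I), ∃ ζ : Bnd I, IsConc x ξ (Sum.inr ζ))
    (x : Heap I) (ζ : Bnd I) :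
    (concB x ζ ∈ cyl x) ∧
    (∀ z : Heap I, ζ ∈ cyl z → concB x ζ ∈ cyl (x * z)) ∧
    (∀ z : Heap I, concB x ζ ∈ cyl (x * z) → ζ ∈ cyl z) := by
  have hex : ∃ ζ' : Bnd I, IsConc x ζ (Sum.inr ζ') := hconc x ζ
  have hC : IsConc x ζ (Sum.inr (concB x ζ)) := by
    unfold concB
    rw [dif_pos hex]
    exact hex.choose_spec
  set u : ℕ → Heap I := fun n => x * ppSeq ζ.1 n with hu
  have hu_mono : ∀ {m n : ℕ}, m ≤ n → hLe (u m) (u n) :=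
    fun {m n} h => hLe_mul_mono (ppSeq_le _ h)
  have hu_len : ∀ n, n ≤ len (u n) := by
    intro n
    have h1 := len_ppSeq_ge ζ.1 ζ.2.1 n
    have h2 : len (u n) = len x + len (ppSeq ζ.1 n) := len_mul _ _
    omega
  have stab1 : ∀ k, ∃ N, ∀ n, N ≤ n → ppSeq (cf I (u n)) k = ppSeq (cf I (u N)) k := by
    intro k
    obtain ⟨N, hN⟩ := nat_seq_max (g := fun n => len (ppSeq (cf I (u n)) k))
      (B := k * Fintype.card S) (fun n => len_ppSeq_le _ k)
    refine ⟨N, fun n hn => ?_⟩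
    have h1 : hLe (ppSeq (cf I (u N)) k) (ppSeq (cf I (u n)) k) :=
      cf_mono hsymm hirr hCF (hu_mono hn) k
    exact (hLe_eq_of_len_le h1 (hN n)).symm
  have stab2 : ∀ k, ∃ N, ∀ n, N ≤ n → cf I (u n) k = cf I (u N) k := by
    intro k
    obtain ⟨N1, hN1⟩ := stab1 k
    obtain ⟨N2, hN2⟩ := stab1 (k + 1)
    refine ⟨max N1 N2, fun n hn => ?_⟩
    have ek : ppSeq (cf I (u n)) k = ppSeq (cf I (u (max N1 N2))) k :=
      (hN1 n (le_trans (le_max_left _ _) hn)).trans (hN1 _ (le_max_left _ _)).symm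
    have ek1 : ppSeq (cf I (u n)) (k + 1) = ppSeq (cf I (u (max N1 N2))) (k + 1) :=
      (hN2 n (le_trans (le_max_right _ _) hn)).trans (hN2 _ (le_max_right _ _)).symm
    have key : ppSeq (cf I (u n)) (k + 1)
        = ppSeq (cf I (u n)) k * (cf I (u (max N1 N2)) k).heap := by
      rw [ek1, ppSeq_succ, ← ek]
    have h2 : ppSeq (cf I (u n)) k * (cf I (u n) k).heap
        = ppSeq (cf I (u n)) k * (cf I (u (max N1 N2)) k).heap := by
      rw [← ppSeq_succ]
      exact key
    exact heap_inj (heap_cancel_left hsymm hirr h2)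
  -- the limit sequence
  set NF : ℕ → ℕ := fun k => (stab2 k).choose with hNF
  have hNFs : ∀ k, ∀ n, NF k ≤ n → cf I (u n) k = cf I (u (NF k)) k :=
    fun k => (stab2 k).choose_spec
  set NN : ℕ → ℕ := fun k => (Finset.range k).sup NF with hNN
  have e_eq : ∀ k n, NN k ≤ n → ∀ j, j < k → cf I (u n) j = cf I (u (NN (j + 1))) j := by
    intro k n hn j hj
    have hj1 : NF j ≤ NN k := Finset.le_sup (Finset.mem_range.mpr hj)
    have hj2 : NF j ≤ NN (j + 1) := Finset.le_sup (Finset.mem_range.mpr (by omega))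
    rw [hNFs j n (le_trans hj1 hn), hNFs j (NN (j + 1)) hj2]
  set e : ℕ → Cl I := fun j => cf I (u (NN (j + 1))) j with he
  have EppA : ∀ k n, NN k ≤ n → ppSeq e k = ppSeq (cf I (u n)) k := by
    intro k n hn
    refine ppSeq_congr (c := e) (d := cf I (u n)) (fun j hj => ?_)
    show cf I (u (NN (j + 1))) j = cf I (u n) j
    exact (e_eq k n hn j hj).symm
  have hmv : ∀ j, Move (e j) (e (j + 1)) := by
    intro j
    show Move (cf I (u (NN (j + 1))) j) (cf I (u (NN (j + 1 + 1))) (j + 1))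
    rw [← e_eq (j + 2) (NN (j + 2)) le_rfl j (by omega),
        ← e_eq (j + 2) (NN (j + 2)) le_rfl (j + 1) (by omega)]
    exact (cf_spec hsymm hirr hCF (u (NN (j + 2)))).1 j
  have hne : ∀ j, (e j).1.Nonempty := by
    intro j
    by_contra hc
    have hce : e j = emptyCl I := Subtype.ext (Finset.not_nonempty_iff_eq_empty.mp hc)
    set n := max (NN (j + 1)) (j * Fintype.card S + 1) with hn
    have h1 : cf I (u n) j = emptyCl I := by
      rw [e_eq (j + 1) n (le_max_left _ _) j (by omega)]
      exact hce
    have h2 : ∀ m, j ≤ m → cf I (u n) m = emptyCl I := cf_empty_tail hsymm hirr hCF h1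
    obtain ⟨M, hM⟩ := cf_self hsymm hirr hCF (u n)
    have h3 : u n = ppSeq (cf I (u n)) j :=
      (hM (max M j) (le_max_left _ _)).symm.trans (ppSeq_stable h2 (le_max_right M j))
    have h4 : len (u n) ≤ j * Fintype.card S := by
      rw [h3]
      exact len_ppSeq_le _ j
    have h5 := hu_len n
    have h6 : j * Fintype.card S + 1 ≤ n := le_max_right _ _
    omega
  set E : Bnd I := ⟨e, hne, hmv⟩ with hE
  have Eupper : ∀ k, hLe (ppSeq e k) (u (NN k)) := by
    intro k
    rw [EppA k (NN k) le_rfl]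
    exact cf_le_self hsymm hirr hCF _ k
  have Elower : ∀ n, ∃ m, hLe (u n) (ppSeq e m) := by
    intro n
    obtain ⟨M, hM⟩ := cf_self hsymm hirr hCF (u n)
    refine ⟨M, ?_⟩
    have h1 : hLe (u n) (u (max n (NN M))) := hu_mono (le_max_left _ _)
    have h2 := cf_mono hsymm hirr hCF h1 M
    rw [hM M le_rfl] at h2
    rwa [EppA M (max n (NN M)) (le_max_right _ _)]
  have hIE : IsConc x ζ (Sum.inr E) := by
    constructor
    · intro n
      apply (mle_inl_inr hsymm hirr hCF).mpr
      obtain ⟨m, hm⟩ := Elower n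
      exact ⟨m, hm⟩
    · intro η hη
      cases η with
      | inl h =>
        exfalso
        have h1 := (mle_inl_inl hsymm hirr hCF).mp (hη (len h + 1))
        have h2 := hLe_len_le h1
        have h3 : len h + 1 ≤ len (x * pp (Sum.inr ζ) (len h + 1)) := hu_len _
        omega
      | inr θ =>
        unfold mLe
        intro k
        rw [pp_inr, pp_inr]
        show hLe (ppSeq e k) (ppSeq θ.1 k)
        obtain ⟨m, hm⟩ := (mle_inl_inr hsymm hirr hCF).mp (hη (NN k))
        have h2 : hLe (u (NN k)) (ppSeq θ.1 (max m k)) :=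
          hLe_trans hm (ppSeq_le _ (le_max_left m k))
        have h3 := cf_mono hsymm hirr hCF h2 k
        rw [cf_padded hsymm hirr hCF θ (max m k), ppSeq_padded] at h3
        have h4 : min k (max m k) = k := by omega
        rw [h4] at h3
        rwa [EppA k (NN k) le_rfl]
  have hχE : mLe (Sum.inr (concB x ζ)) (Sum.inr E) := hC.2 (Sum.inr E) hIE.1
  have hχcyl : concB x ζ ∈ cyl x := by
    apply (mem_cyl hsymm hirr hCF).mpr
    obtain ⟨m, hm⟩ := (mle_inl_inr hsymm hirr hCF).mp (hC.1 0)
    refine ⟨m, ?_⟩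
    have e0 : x * pp (Sum.inr ζ) 0 = x := by rw [pp_inr, ppSeq_zero, mul_one]
    rwa [e0] at hm
  refine ⟨hχcyl, ?_, ?_⟩
  · intro z hz
    obtain ⟨n, hn⟩ := (mem_cyl hsymm hirr hCF).mp hz
    obtain ⟨m, hm⟩ := (mle_inl_inr hsymm hirr hCF).mp (hC.1 n)
    apply (mem_cyl hsymm hirr hCF).mpr
    refine ⟨m, hLe_trans ?_ hm⟩
    show hLe (x * z) (x * pp (Sum.inr ζ) n)
    rw [pp_inr]
    exact hLe_mul_mono hn
  · intro z hz
    obtain ⟨m, hm⟩ := (mem_cyl hsymm hirr hCF).mp hz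
    have h1 : hLe (ppSeq (concB x ζ).1 m) (ppSeq e m) := by
      have h0 := (mle_def.mp hχE) m
      rwa [pp_inr, pp_inr] at h0
    have h2 : hLe (x * z) (u (NN m)) :=
      hLe_trans hm (hLe_trans h1 (Eupper m))
    apply (mem_cyl hsymm hirr hCF).mpr
    exact ⟨NN m, hLe_cancel hsymm hirr h2⟩

end DevBnd


section DevSub
set_option linter.unusedSectionVars false
variable {S : Type} [Fintype S] [DecidableEq S] {I : S → S → Prop}

lemma heap_countable : Countable (Heap I) := by
  haveI : Countable (FreeMonoid S) := inferInstanceAs (Countable (List S))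
  exact (Con.mk'_surjective (c := HeapCon I)).countable

variable (hsymm : ∀ a b : S, I a b → I b a) (hirr : ∀ a : S, ¬ I a a)
variable (hCF : ∀ x : Heap I, ∃! c : ℕ → Cl I, CFprop I c x)
variable (hconc : ∀ (x : Heap I) (ξ : Bnd I), ∃ ζ : Bnd I, IsConc x ξ (Sum.inr ζ))
variable (hconcInj : ∀ (x : Heap I) (ζ ζ' : Bnd I), concB x ζ = concB x ζ' → ζ = ζ')
variable (hsubEx : ∀ (x : Heap I) (ξ : Bnd I), ξ ∈ cyl x → ∃ ζ : Bnd I, concB x ζ = ξ)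

lemma subB_concB (hconcInj : ∀ (x : Heap I) (ζ ζ' : Bnd I), concB x ζ = concB x ζ' → ζ = ζ')
    (x : Heap I) (ζ : Bnd I) : subB (concB x ζ) x = ζ := by
  have hex : ∃ ζ' : Bnd I, concB x ζ' = concB x ζ := ⟨ζ, rfl⟩
  unfold subB
  rw [dif_pos hex]
  exact hconcInj x _ _ hex.choose_spec

lemma concB_subB (hsubEx : ∀ (x : Heap I) (ξ : Bnd I), ξ ∈ cyl x → ∃ ζ : Bnd I, concB x ζ = ξ)
    {x : Heap I} {η : Bnd I} (hη : η ∈ cyl x) : concB x (subB η x) = η := by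
  have hex := hsubEx x η hη
  unfold subB
  rw [dif_pos hex]
  exact hex.choose_spec

include hsymm hirr hCF hconc

lemma subB_not_mem {x : Heap I} {η : Bnd I} (hη : η ∉ cyl x) : subB η x = η := by
  unfold subB
  rw [dif_neg]
  rintro ⟨ζ, rfl⟩
  exact hη (concB_spec hsymm hirr hCF hconc x ζ).1

include hconcInj hsubEx

lemma subB_cyl_iff {x z : Heap I} {η : Bnd I} (hη : η ∈ cyl x) :
    subB η x ∈ cyl z ↔ η ∈ cyl (x * z) := by
  obtain ⟨ζ, rfl⟩ := hsubEx x η hη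
  rw [subB_concB hconcInj x ζ]
  exact ⟨fun h => (concB_spec hsymm hirr hCF hconc x ζ).2.1 z h,
    fun h => (concB_spec hsymm hirr hCF hconc x ζ).2.2 z h⟩

lemma subB_preimage (x z : Heap I) :
    (fun η : Bnd I => subB η x) ⁻¹' (cyl z) = cyl (x * z) ∪ (cyl z \ cyl x) := by
  ext η
  simp only [Set.mem_preimage, Set.mem_union, Set.mem_diff]
  by_cases hη : η ∈ cyl x
  · rw [subB_cyl_iff hsymm hirr hCF hconc hconcInj hsubEx hη]
    constructor
    · exact fun h => Or.inl h
    · rintro (h | ⟨h1, h2⟩)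
      · exact h
      · exact absurd hη h2
  · rw [subB_not_mem hsymm hirr hCF hconc hη]
    constructor
    · intro h
      exact Or.inr ⟨h, hη⟩
    · rintro (h | ⟨h1, -⟩)
      · exact absurd (cyl_mono hsymm hirr hCF (hLe_mul_right x z) h) hη
      · exact h1

omit hconc hconcInj hsubEx
omit hsymm hirr hCF

lemma measurableSet_cyl (x : Heap I) : MeasurableSet (cyl x) :=
  MeasurableSpace.measurableSet_generateFrom ⟨x, rfl⟩

include hsymm hirr hCF hconc hconcInj hsubEx

lemma measurable_subB (x : Heap I) :
    Measurable (fun η : Bnd I => subB η x) := by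
  apply measurable_generateFrom
  rintro t ⟨z, rfl⟩
  rw [subB_preimage hsymm hirr hCF hconc hconcInj hsubEx x z]
  exact (measurableSet_cyl (x * z)).union ((measurableSet_cyl z).diff (measurableSet_cyl x))

omit hconc hconcInj hsubEx

lemma ls_lemma {a : S} {v m : Heap I} (h : hLe v (sg I a * m)) (hna : ¬ hLe (sg I a) v) :
    (∀ c : S, 0 < occ c v → I c a) ∧ hLe v m := by
  obtain ⟨r, hr⟩ := h
  have hmin : hLe (sg I a) (v * r) := by rw [← hr]; exact hLe_mul_right _ _
  rcases (dvd_mul_iff hsymm).mp hmin with h' | ⟨hind, har⟩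
  · exact absurd h' hna
  refine ⟨hind, ?_⟩
  obtain ⟨r', hr'⟩ := har
  have hcomm : v * sg I a = sg I a * v := sg_comm_heap hind
  have hkey : sg I a * m = sg I a * (v * r') := by
    rw [hr, hr', ← mul_assoc, hcomm, mul_assoc]
  exact ⟨r', heap_cancel_left hsymm hirr hkey⟩

lemma lub_exists : ∀ (n : ℕ) (uu v t : Heap I), len uu ≤ n → hLe uu t → hLe v t →
    ∃ w, hLe uu w ∧ hLe v w ∧ ∀ t', hLe uu t' → hLe v t' → hLe w t' := by
  intro n
  induction n with
  | zero =>
    intro uu v t hl _ _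
    have h1 : uu = 1 := eq_one_of_len_eq_zero (by omega)
    subst h1
    exact ⟨v, hLe_one v, hLe_refl v, fun t' _ h2 => h2⟩
  | succ n ih =>
    intro uu v t hl hut hvt
    by_cases h1 : uu = 1
    · subst h1
      exact ⟨v, hLe_one v, hLe_refl v, fun t' _ h2 => h2⟩
    obtain ⟨a, ha⟩ := exists_sg_dvd h1
    obtain ⟨u₁, hu₁⟩ := ha
    have ha : hLe (sg I a) uu := ⟨u₁, hu₁⟩
    have hat : hLe (sg I a) t := hLe_trans ha hut
    obtain ⟨t₂, ht₂⟩ := hat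
    have hu₁t : hLe u₁ t₂ := by
      apply hLe_cancel hsymm hirr (x := sg I a)
      rw [← hu₁, ← ht₂]
      exact hut
    have hlen : len u₁ ≤ n := by
      have h2 := congrArg len hu₁
      rw [len_mul, len_sg] at h2
      omega
    by_cases hav : hLe (sg I a) v
    · obtain ⟨v₂, hv₂⟩ := hav
      have hv₂t : hLe v₂ t₂ := by
        apply hLe_cancel hsymm hirr (x := sg I a)
        rw [← hv₂, ← ht₂]
        exact hvt
      obtain ⟨w', hw1, hw2, hw3⟩ := ih u₁ v₂ t₂ hlen hu₁t hv₂t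
      refine ⟨sg I a * w', ?_, ?_, ?_⟩
      · rw [hu₁]; exact hLe_mul_mono hw1
      · rw [hv₂]; exact hLe_mul_mono hw2
      · intro t' h1' h2'
        obtain ⟨t₃, ht₃⟩ := hLe_trans ha h1'
        have e1 : hLe u₁ t₃ := by
          apply hLe_cancel hsymm hirr (x := sg I a)
          rw [← hu₁, ← ht₃]; exact h1'
        have e2 : hLe v₂ t₃ := by
          apply hLe_cancel hsymm hirr (x := sg I a)
          rw [← hv₂, ← ht₃]; exact h2'
        rw [ht₃]
        exact hLe_mul_mono (hw3 t₃ e1 e2)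
    · have hls := ls_lemma hsymm hirr hCF (show hLe v (sg I a * t₂) by rw [← ht₂]; exact hvt) hav
      obtain ⟨w', hw1, hw2, hw3⟩ := ih u₁ v t₂ hlen hu₁t hls.2
      have hcomm : v * sg I a = sg I a * v := sg_comm_heap hls.1
      refine ⟨sg I a * w', ?_, ?_, ?_⟩
      · rw [hu₁]; exact hLe_mul_mono hw1
      · obtain ⟨sW, hsW⟩ := hw2
        refine ⟨sg I a * sW, ?_⟩
        rw [hsW, ← mul_assoc, ← hcomm, mul_assoc]
      · intro t' h1' h2'
        obtain ⟨t₃, ht₃⟩ := hLe_trans ha h1'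
        have e1 : hLe u₁ t₃ := by
          apply hLe_cancel hsymm hirr (x := sg I a)
          rw [← hu₁, ← ht₃]; exact h1'
        have e2 : hLe v t₃ :=
          (ls_lemma hsymm hirr hCF (show hLe v (sg I a * t₃) by rw [← ht₃]; exact h2') hav).2
        rw [ht₃]
        exact hLe_mul_mono (hw3 t₃ e1 e2)

include hCF

lemma cyl_inter (z₁ z₂ : Heap I) :
    cyl (I := I) z₁ ∩ cyl z₂ = ∅ ∨ ∃ Z : Heap I, cyl (I := I) z₁ ∩ cyl z₂ = cyl Z := by
  rcases Set.eq_empty_or_nonempty (cyl (I := I) z₁ ∩ cyl z₂) with h | ⟨ξ, h1, h2⟩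
  · exact Or.inl h
  right
  obtain ⟨n1, hn1⟩ := (mem_cyl hsymm hirr hCF).mp h1
  obtain ⟨n2, hn2⟩ := (mem_cyl hsymm hirr hCF).mp h2
  have ht1 : hLe z₁ (ppSeq ξ.1 (max n1 n2)) := hLe_trans hn1 (ppSeq_le _ (le_max_left _ _))
  have ht2 : hLe z₂ (ppSeq ξ.1 (max n1 n2)) := hLe_trans hn2 (ppSeq_le _ (le_max_right _ _))
  obtain ⟨w, hw1, hw2, hw3⟩ := lub_exists hsymm hirr hCF (len z₁) z₁ z₂ _ le_rfl ht1 ht2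
  refine ⟨w, Set.Subset.antisymm ?_ ?_⟩
  · intro ξ' hξ'
    obtain ⟨m1, hm1⟩ := (mem_cyl hsymm hirr hCF).mp hξ'.1
    obtain ⟨m2, hm2⟩ := (mem_cyl hsymm hirr hCF).mp hξ'.2
    apply (mem_cyl hsymm hirr hCF).mpr
    exact ⟨max m1 m2, hw3 _ (hLe_trans hm1 (ppSeq_le _ (le_max_left _ _)))
      (hLe_trans hm2 (ppSeq_le _ (le_max_right _ _)))⟩
  · intro ξ' hξ'
    exact ⟨cyl_mono hsymm hirr hCF hw1 hξ', cyl_mono hsymm hirr hCF hw2 hξ'⟩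

end DevSub


section DevMeasure
set_option linter.unusedSectionVars false
open MeasureTheory
variable {S : Type} [Fintype S] [DecidableEq S] {I : S → S → Prop}
variable (hsymm : ∀ a b : S, I a b → I b a) (hirr : ∀ a : S, ¬ I a a)
variable (hCF : ∀ x : Heap I, ∃! c : ℕ → Cl I, CFprop I c x)
variable (hconc : ∀ (x : Heap I) (ξ : Bnd I), ∃ ζ : Bnd I, IsConc x ξ (Sum.inr ζ))
variable (hconcInj : ∀ (x : Heap I) (ζ ζ' : Bnd I), concB x ζ = concB x ζ' → ζ = ζ')
variable (hsubEx : ∀ (x : Heap I) (ξ : Bnd I), ξ ∈ cyl x → ∃ ζ : Bnd I, concB x ζ = ξ)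
include hsymm hirr hCF hconc hconcInj hsubEx

lemma map_subB {P : Measure (Bnd I)} (hP : IsBernoulli P) (x : Heap I) :
    Measure.map (fun η : Bnd I => subB η x) (P.restrict (cyl x)) = P (cyl x) • P := by
  haveI : IsProbabilityMeasure P := hP.1
  have hms := measurable_subB hsymm hirr hCF hconc hconcInj hsubEx x
  haveI : IsFiniteMeasure (Measure.map (fun η : Bnd I => subB η x) (P.restrict (cyl x))) :=
    Measure.isFiniteMeasure_map _ _
  have huniv : (Measure.map (fun η : Bnd I => subB η x) (P.restrict (cyl x))) Set.univ
      = (P (cyl x) • P) Set.univ := by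
    rw [Measure.map_apply hms MeasurableSet.univ, Set.preimage_univ,
      Measure.restrict_apply' (measurableSet_cyl x), Set.univ_inter,
      Measure.smul_apply, measure_univ, smul_eq_mul, mul_one]
  apply MeasureTheory.ext_of_generate_finite
      (insert ∅ {A : Set (Bnd I) | ∃ z : Heap I, A = cyl z}) ?_ ?_ ?_ huniv
  · rw [MeasurableSpace.generateFrom_insert_empty]
    rfl
  · rintro s hs t ht hst
    rcases hs with rfl | ⟨z₁, rfl⟩
    · simp at hst
    rcases ht with rfl | ⟨z₂, rfl⟩
    · simp at hst
    rcases cyl_inter hsymm hirr hCF z₁ z₂ with h | ⟨Z, hZ⟩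
    · rw [h] at hst
      simp at hst
    · rw [hZ]
      exact Or.inr ⟨Z, rfl⟩
  · rintro s (rfl | ⟨z, rfl⟩)
    · simp
    rw [Measure.map_apply hms (measurableSet_cyl z),
      Measure.restrict_apply' (measurableSet_cyl x),
      subB_preimage hsymm hirr hCF hconc hconcInj hsubEx x z]
    have hset : ((cyl (x * z) ∪ (cyl z \ cyl x)) ∩ cyl x) = cyl (I := I) (x * z) := by
      ext η
      simp only [Set.mem_inter_iff, Set.mem_union, Set.mem_diff]
      constructor
      · rintro ⟨h1 | ⟨h2, h3⟩, h4⟩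
        · exact h1
        · exact absurd h4 h3
      · intro h
        exact ⟨Or.inl h, cyl_mono hsymm hirr hCF (hLe_mul_right x z) h⟩
    rw [hset, hP.2.1 x z, Measure.smul_apply, smul_eq_mul]

lemma lint_subB {P : Measure (Bnd I)} (hP : IsBernoulli P) (x : Heap I)
    (g : Bnd I → ℝ≥0∞) (hg : Measurable g) :
    ∫⁻ η in cyl x, g (subB η x) ∂P = P (cyl x) * ∫⁻ η, g η ∂P := by
  have h1 := MeasureTheory.lintegral_map hg
    (measurable_subB hsymm hirr hCF hconc hconcInj hsubEx x)
    (μ := P.restrict (cyl x))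
  rw [map_subB hsymm hirr hCF hconc hconcInj hsubEx hP x,
    MeasureTheory.lintegral_smul_measure] at h1
  exact h1.symm

lemma int_subB {P : Measure (Bnd I)} (hP : IsBernoulli P) (x : Heap I)
    {g : Bnd I → ℝ} (hg : Measurable g) :
    ∫ η in cyl x, g (subB η x) ∂P = (P (cyl x)).toReal * ∫ η, g η ∂P := by
  have h1 := MeasureTheory.integral_map (φ := fun η : Bnd I => subB η x)
    (μ := P.restrict (cyl x))
    (measurable_subB hsymm hirr hCF hconc hconcInj hsubEx x).aemeasurable
    hg.aestronglyMeasurable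
  rw [map_subB hsymm hirr hCF hconc hconcInj hsubEx hP x,
    MeasureTheory.integral_smul_measure, smul_eq_mul] at h1
  exact h1.symm

end DevMeasure


theorem strong_bernoulli_property
    {S : Type} [Fintype S] [DecidableEq S] (I : S → S → Prop)
    (hsymm : ∀ a b : S, I a b → I b a)
    (hirr : ∀ a : S, ¬ I a a)
    (hconn : ∀ a b : S, Relation.ReflTransGen (fun x y : S => x ≠ y ∧ ¬ I x y) a b)
    (hcard : 1 < Fintype.card S)
    (hCF : ∀ x : Heap I, ∃! c : ℕ → Cl I, CFprop I c x)
    (hconc : ∀ (x : Heap I) (ξ : Bnd I), ∃ ζ : Bnd I, IsConc x ξ (Sum.inr ζ))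
    (hconcInj : ∀ (x : Heap I) (ζ ζ' : Bnd I), concB x ζ = concB x ζ' → ζ = ζ')
    (hsubEx : ∀ (x : Heap I) (ξ : Bnd I), ξ ∈ cyl x → ∃ ζ : Bnd I, concB x ζ = ξ)
    (P : Measure (Bnd I)) (hP : IsBernoulli P)
    (V : Bnd I → MB I) (hV : IsAST V)
    (ψ : Bnd I → ℝ) (hψm : Measurable ψ)
    (hψ : (∀ ξ : Bnd I, 0 ≤ ψ ξ) ∨ Integrable ψ P) :
    ∀ᵐ ξ ∂P, (∃ x : Heap I, V ξ = Sum.inl x) →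
      (P[extShift V ψ|astSA V]) ξ = ∫ η, ψ η ∂P := by
  classical
  haveI : IsProbabilityMeasure P := hP.1
  haveI : Countable (Heap I) := heap_countable
  set A : Set (Heap I) := {x : Heap I | ∃ ξ : Bnd I, V ξ = Sum.inl x} with hA
  have hVcyl : ∀ x ∈ A, ∀ ξ : Bnd I, ξ ∈ cyl x → V ξ = Sum.inl x := by
    rintro x ⟨ξ₀, hξ₀⟩ ξ hξ
    rw [hV.2 ξ₀ ξ x hξ₀ hξ, hξ₀]
  have hVmem : ∀ (ξ : Bnd I) (x : Heap I), V ξ = Sum.inl x → ξ ∈ cyl x := by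
    intro ξ x hx
    have h1 := hV.1 ξ
    rw [hx] at h1
    exact h1
  set D : Set (Bnd I) := ⋃ x ∈ A, cyl x with hD
  have hAcnt : A.Countable := Set.to_countable A
  have hdisj : ∀ x ∈ A, ∀ y ∈ A, x ≠ y → Disjoint (cyl (I := I) x) (cyl y) := by
    intro x hx y hy hxy
    rw [Set.disjoint_left]
    intro ξ h1 h2
    exact hxy (Sum.inl.inj ((hVcyl x hx ξ h1).symm.trans (hVcyl y hy ξ h2)))
  have hDmeas : MeasurableSet D := MeasurableSet.biUnion hAcnt (fun x _ => measurableSet_cyl x)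
  have hf_on : ∀ x ∈ A, ∀ ξ ∈ cyl x, extShift V ψ ξ = ψ (subB ξ x) := by
    intro x hx ξ hξ
    have h1 := hVcyl x hx ξ hξ
    simp only [extShift, shiftV, h1]
  have hf_off : ∀ ξ : Bnd I, ξ ∉ D → extShift V ψ ξ = 0 := by
    intro ξ hξ
    unfold extShift
    cases hV' : V ξ with
    | inl x => exact absurd (Set.mem_biUnion (show x ∈ A from ⟨ξ, hV'⟩) (hVmem ξ x hV')) hξ
    | inr θ => rfl
  by_cases hIntψ : Integrable ψ P
  swap
  · -- the non-integrable (nonnegative) case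
    have hint0 : ∫ η, ψ η ∂P = 0 := integral_undef hIntψ
    rcases Set.eq_empty_or_nonempty A with hAe | ⟨x₀, hx₀⟩
    · apply Filter.Eventually.of_forall
      rintro ξ ⟨x, hx⟩
      exact absurd (show x ∈ A from ⟨ξ, hx⟩) (by rw [hAe]; exact Set.notMem_empty x)
    · have hfnotint : ¬ Integrable (extShift V ψ) P := by
        intro hIf
        apply hIntψ
        refine ⟨hψm.aestronglyMeasurable, ?_⟩
        have hnn := lint_subB hsymm hirr hCF hconc hconcInj hsubEx hP x₀
          (fun η => (‖ψ η‖₊ : ℝ≥0∞)) hψm.nnnorm.coe_nnreal_ennreal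
        have hcg : ∫⁻ η in cyl x₀, (‖extShift V ψ η‖₊ : ℝ≥0∞) ∂P
            = ∫⁻ η in cyl x₀, (‖ψ (subB η x₀)‖₊ : ℝ≥0∞) ∂P := by
          apply setLIntegral_congr_fun (measurableSet_cyl x₀)
          intro ξ hξ
          dsimp only
          rw [hf_on x₀ hx₀ ξ hξ]
        have hle : ∫⁻ η in cyl x₀, (‖extShift V ψ η‖₊ : ℝ≥0∞) ∂P
            ≤ ∫⁻ η, (‖extShift V ψ η‖₊ : ℝ≥0∞) ∂P := setLIntegral_le_lintegral _ _
        have hfin : ∫⁻ η, (‖extShift V ψ η‖₊ : ℝ≥0∞) ∂P < ⊤ := hIf.2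
        rw [hcg, hnn] at hle
        show (∫⁻ a, (‖ψ a‖₊ : ℝ≥0∞) ∂P) < ⊤
        by_contra htop
        have htop' : (∫⁻ a, (‖ψ a‖₊ : ℝ≥0∞) ∂P) = ⊤ := by
          simpa [lt_top_iff_ne_top] using htop
        rw [htop', ENNReal.mul_top (hP.2.2 x₀).ne'] at hle
        exact absurd hle (not_le_of_gt hfin)
      rw [condExp_of_not_integrable hfnotint]
      apply Filter.Eventually.of_forall
      intro ξ _
      rw [hint0]
      rfl
  · -- the integrable case
    -- measurability of the extended shift
    have hfm : Measurable (extShift V ψ) := by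
      intro t ht
      have hpre : extShift V ψ ⁻¹' t =
          (⋃ x ∈ A, cyl x ∩ (fun η => ψ (subB η x)) ⁻¹' t) ∪
            (Dᶜ ∩ (if (0 : ℝ) ∈ t then Set.univ else ∅)) := by
        ext ξ
        simp only [Set.mem_preimage, Set.mem_union, Set.mem_inter_iff, Set.mem_iUnion]
        by_cases hξD : ξ ∈ D
        · have hξD' := hξD
          rw [hD] at hξD'
          obtain ⟨x, hx, hξx⟩ := Set.mem_iUnion₂.mp hξD'
          constructor
          · intro h
            exact Or.inl ⟨x, hx, hξx, by rwa [← hf_on x hx ξ hξx]⟩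
          · rintro (⟨y, hy, hξy, hψy⟩ | ⟨hc, -⟩)
            · have hyx : y = x :=
                Sum.inl.inj ((hVcyl y hy ξ hξy).symm.trans (hVcyl x hx ξ hξx))
              subst hyx
              rwa [hf_on y hy ξ hξy]
            · exact absurd hξD hc
        · rw [hf_off ξ hξD]
          constructor
          · intro h0
            refine Or.inr ⟨hξD, ?_⟩
            rw [if_pos h0]
            trivial
          · rintro (⟨y, hy, hξy, -⟩ | ⟨-, hmem⟩)
            · exact absurd (Set.mem_biUnion hy hξy) hξD
            · by_cases h0 : (0 : ℝ) ∈ t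
              · exact h0
              · rw [if_neg h0] at hmem
                exact absurd hmem (Set.notMem_empty ξ)
      rw [hpre]
      refine MeasurableSet.union ?_ ?_
      · exact MeasurableSet.biUnion hAcnt (fun x _ => (measurableSet_cyl x).inter
          ((hψm.comp (measurable_subB hsymm hirr hCF hconc hconcInj hsubEx x)) ht))
      · refine hDmeas.compl.inter ?_
        split_ifs
        exacts [MeasurableSet.univ, MeasurableSet.empty]
    haveI : Countable ↥A := hAcnt.to_subtype
    have hDU : D = ⋃ (x : ↥A), cyl (I := I) (x : Heap I) := by
      rw [hD]
      exact Set.biUnion_eq_iUnion A (fun x _ => cyl x)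
    have hpair : Pairwise (Function.onFun Disjoint fun (x : ↥A) => cyl (I := I) (x : Heap I)) :=
      fun x y hxy => hdisj x.1 x.2 y.1 y.2 (fun h => hxy (Subtype.ext h))
    have hPD : P D = ∑' (x : ↥A), P (cyl (I := I) (x : Heap I)) := by
      rw [hDU]
      exact measure_iUnion hpair (fun x => measurableSet_cyl _)
    have hf_fin : ∫⁻ η, (‖extShift V ψ η‖₊ : ℝ≥0∞) ∂P < ⊤ := by
      rw [← lintegral_add_compl (fun η => (‖extShift V ψ η‖₊ : ℝ≥0∞)) hDmeas]
      have h2 : ∫⁻ η in Dᶜ, (‖extShift V ψ η‖₊ : ℝ≥0∞) ∂P = 0 := by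
        have hz : ∀ ξ ∈ Dᶜ, (‖extShift V ψ ξ‖₊ : ℝ≥0∞) = 0 := by
          intro ξ hξ
          rw [hf_off ξ hξ]
          simp
        rw [setLIntegral_congr_fun hDmeas.compl hz]
        simp
      have h4 : ∀ x : ↥A, ∫⁻ η in cyl (I := I) (x : Heap I), (‖extShift V ψ η‖₊ : ℝ≥0∞) ∂P
          = P (cyl (I := I) (x : Heap I)) * ∫⁻ η, (‖ψ η‖₊ : ℝ≥0∞) ∂P := by
        intro x
        have hcg : ∀ ξ ∈ cyl (I := I) (x : Heap I), (‖extShift V ψ ξ‖₊ : ℝ≥0∞)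
            = (fun η => (‖ψ η‖₊ : ℝ≥0∞)) (subB ξ (x : Heap I)) := by
          intro ξ hξ
          rw [hf_on x.1 x.2 ξ hξ]
        rw [setLIntegral_congr_fun (measurableSet_cyl _) hcg]
        exact lint_subB hsymm hirr hCF hconc hconcInj hsubEx hP _ _ hψm.nnnorm.coe_nnreal_ennreal
      have h3 : ∫⁻ η in D, (‖extShift V ψ η‖₊ : ℝ≥0∞) ∂P
          = P D * ∫⁻ η, (‖ψ η‖₊ : ℝ≥0∞) ∂P := by
        rw [hDU, lintegral_iUnion (fun x => measurableSet_cyl _) hpair, tsum_congr h4,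
          ENNReal.tsum_mul_right, ← hPD, hDU]
      rw [h2, h3, add_zero]
      have hb1 : P D ≤ 1 := prob_le_one
      calc P D * ∫⁻ η, (‖ψ η‖₊ : ℝ≥0∞) ∂P ≤ 1 * ∫⁻ η, (‖ψ η‖₊ : ℝ≥0∞) ∂P :=
            mul_le_mul_left hb1 _
        _ = ∫⁻ η, (‖ψ η‖₊ : ℝ≥0∞) ∂P := one_mul _
        _ < ⊤ := hIntψ.2
    have hIntf : Integrable (extShift V ψ) P := ⟨hfm.aestronglyMeasurable, hf_fin⟩
    have hatom : ∀ x ∈ A, ∫ η in cyl x, extShift V ψ η ∂P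
        = (P (cyl x)).toReal * ∫ η, ψ η ∂P := by
      intro x hx
      rw [setIntegral_congr_fun (measurableSet_cyl x) (fun ξ hξ => hf_on x hx ξ hξ)]
      exact int_subB hsymm hirr hCF hconc hconcInj hsubEx hP x hψm
    set g : Bnd I → ℝ := D.indicator (fun _ => ∫ η, ψ η ∂P) with hgdef
    have hIntg : Integrable g P := (integrable_const _).indicator hDmeas
    have hm_le : astSA V ≤ Fsa I := by
      apply MeasurableSpace.generateFrom_le
      rintro t ⟨x, hx, rfl⟩
      exact measurableSet_cyl x
    haveI : SigmaFinite (P.trim hm_le) := by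
      haveI : IsFiniteMeasure (P.trim hm_le) := isFiniteMeasure_trim hm_le
      infer_instance
    have hD_ast : MeasurableSet[astSA V] D := by
      rw [hD]
      exact MeasurableSet.biUnion hAcnt
        (fun x hx => MeasurableSpace.measurableSet_generateFrom ⟨x, hx, rfl⟩)
    have hgm : AEStronglyMeasurable[astSA V] g P :=
      StronglyMeasurable.aestronglyMeasurable (stronglyMeasurable_const.indicator hD_ast)
    have hgatom : ∀ x ∈ A, ∫ η in cyl x, g η ∂P = (P (cyl x)).toReal * ∫ η, ψ η ∂P := by
      intro x hx
      have hEq : Set.EqOn g (fun _ => ∫ η, ψ η ∂P) (cyl x) := by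
        intro ξ hξ
        rw [hgdef]
        exact Set.indicator_of_mem (Set.mem_biUnion hx hξ) _
      rw [setIntegral_congr_fun (measurableSet_cyl x) hEq, setIntegral_const, smul_eq_mul, measureReal_def]
    have htotal : ∫ η, g η ∂P = ∫ η, extShift V ψ η ∂P := by
      have h0 : ∫ η in Dᶜ, extShift V ψ η ∂P = 0 := by
        rw [setIntegral_congr_fun hDmeas.compl (fun ξ hξ => hf_off ξ hξ)]
        simp
      have hDf : ∫ η in D, extShift V ψ η ∂P
          = ∑' (x : ↥A), ∫ η in cyl (I := I) (x : Heap I), extShift V ψ η ∂P := by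
        rw [hDU]
        exact integral_iUnion (fun x => measurableSet_cyl _) hpair
          (hDU ▸ hIntf.integrableOn)
      have hsum : ∑' (x : ↥A), ∫ η in cyl (I := I) (x : Heap I), extShift V ψ η ∂P
          = (P D).toReal * ∫ η, ψ η ∂P := by
        rw [tsum_congr (fun x : ↥A => hatom x.1 x.2), tsum_mul_right]
        congr 1
        rw [hPD]
        exact (ENNReal.tsum_toReal_eq (fun x => measure_ne_top P _)).symm
      have hg' : ∫ η, g η ∂P = (P D).toReal * ∫ η, ψ η ∂P := by
        rw [hgdef, integral_indicator hDmeas, setIntegral_const, smul_eq_mul, measureReal_def]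
      rw [hg', ← integral_add_compl hDmeas hIntf, hDf, hsum, h0, add_zero]
    have hg_eq : ∀ s : Set (Bnd I), MeasurableSet[astSA V] s →
        ∫ η in s, g η ∂P = ∫ η in s, extShift V ψ η ∂P := by
      have hpi : IsPiSystem
          {B : Set (Bnd I) | ∃ x : Heap I, (∃ ξ, V ξ = Sum.inl x) ∧ B = cyl x} := by
        rintro s ⟨x, hx, rfl⟩ t ⟨y, hy, rfl⟩ hst
        obtain ⟨ξ, hξ1, hξ2⟩ := hst
        have hxy : x = y := Sum.inl.inj ((hVcyl x hx ξ hξ1).symm.trans (hVcyl y hy ξ hξ2))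
        subst hxy
        rw [Set.inter_self]
        exact ⟨x, hx, rfl⟩
      refine MeasurableSpace.induction_on_inter (m := astSA V) rfl hpi ?_ ?_ ?_ ?_
      · simp
      · rintro t ⟨x, hx, rfl⟩
        rw [hatom x hx, hgatom x hx]
      · intro t htm hC
        have htm' : MeasurableSet t := hm_le t htm
        rw [setIntegral_compl htm' hIntg, setIntegral_compl htm' hIntf, hC, htotal]
      · intro fseq hdisj' hmeas' hC
        rw [integral_iUnion (fun i => hm_le _ (hmeas' i)) hdisj' hIntg.integrableOn,
          integral_iUnion (fun i => hm_le _ (hmeas' i)) hdisj' hIntf.integrableOn]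
        exact tsum_congr hC
    have hcond := ae_eq_condExp_of_forall_setIntegral_eq hm_le hIntf
      (fun s _ _ => hIntg.integrableOn) (fun s hs _ => hg_eq s hs) hgm
    filter_upwards [hcond] with ξ hξ
    rintro ⟨x, hx⟩
    rw [← hξ, hgdef]
    exact Set.indicator_of_mem (Set.mem_biUnion (show x ∈ A from ⟨ξ, hx⟩) (hVmem ξ x hx)) _


end HeapPaper
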